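/- arXiv:2010.06143 — 6 statements merged into one kernel-verified Lean document; each statement's English description precedes it below -/
import Mathlib

section
/- For permutations w in the symmetric group S_n and indices 1 ≤ i < j ≤ n, there is an edge w → w·(i,j) in the quantum Bruhat graph of type A_{n-1} (i.e., either the transposition (i,j) covers w in Bruhat order, giving ℓ(w·(i,j)) = ℓ(w)+1, or ℓ(w·(i,j)) = ℓ(w)+1-2(j-i)) if and only if there is no index l with i < l < j such that w(i) ≺ w(l) ≺ w(j) in the circular order starting at w(i). -/
open scoped Classical

noncomputable section

/-- The length (number of inversions) of a permutation in `S_n`. -/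
def lenA {n : ℕ} (w : Equiv.Perm (Fin n)) : ℕ :=
  (Finset.univ.filter (fun p : Fin n × Fin n => p.1 < p.2 ∧ w p.2 < w p.1)).card

/-- Bruhat edge `w → w·(i,j)` of the type `A_{n-1}` quantum Bruhat graph:
`ℓ(w·(i,j)) = ℓ(w) + 1`. -/
def bEdgeA {n : ℕ} (w : Equiv.Perm (Fin n)) (i j : Fin n) : Prop :=
  i < j ∧ lenA (w * Equiv.swap i j) = lenA w + 1

/-- Quantum edge `w → w·(i,j)`: `ℓ(w·(i,j)) = ℓ(w) + 1 - 2(j - i)`. -/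
def qEdgeA {n : ℕ} (w : Equiv.Perm (Fin n)) (i j : Fin n) : Prop :=
  i < j ∧ lenA (w * Equiv.swap i j) + 2 * ((j : ℕ) - (i : ℕ)) = lenA w + 1

/-- Edge of the quantum Bruhat graph `QB(S_n)` labeled by the transposition `(i,j)`. -/
def edgeA {n : ℕ} (w : Equiv.Perm (Fin n)) (i j : Fin n) : Prop :=
  bEdgeA w i j ∨ qEdgeA w i j

/-- `a ≺ b ≺ c` in the circular order on `{1,…,n}` starting at `a`. -/
def circB {n : ℕ} (a b c : Fin n) : Prop := b ≠ a ∧ b - a < c - a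

/-- `a ≺ʳ b ≺ʳ c` in the reverse circular order on `{1,…,n}` starting at `a`. -/
def circBR {n : ℕ} (a b c : Fin n) : Prop := b ≠ a ∧ a - b < a - c

/- ### Auxiliary material -/

lemma fin_sub_val {n : ℕ} (a b : Fin n) :
    (b - a).val = if a.val ≤ b.val then b.val - a.val else b.val + n - a.val := by
  have hb := b.isLt
  have ha := a.isLt
  rw [Fin.sub_def]
  simp only
  split
  · next h =>
    have e : n - a.val + b.val = (b.val - a.val) + n := by omega
    rw [e, Nat.add_mod_right, Nat.mod_eq_of_lt (by omega)]
  · next h =>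
    rw [Nat.mod_eq_of_lt (by omega)]
    omega

lemma circB_char {n : ℕ} (a b c : Fin n) :
    circB a b c ↔ b.val ≠ a.val ∧
      ((if a.val ≤ b.val then b.val - a.val else b.val + n - a.val) <
       (if a.val ≤ c.val then c.val - a.val else c.val + n - a.val)) := by
  rw [circB, Fin.lt_def, fin_sub_val, fin_sub_val]
  exact and_congr (not_congr (Fin.ext_iff)) Iff.rfl

def Pset (n : ℕ) : Finset (Fin n × Fin n) := Finset.univ.filter fun p => p.1 < p.2

lemma mem_Pset {n : ℕ} {p : Fin n × Fin n} : p ∈ Pset n ↔ p.1 < p.2 := by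
  simp [Pset]

lemma lenA_eq_sum {n : ℕ} (w : Equiv.Perm (Fin n)) :
    lenA w = ∑ p ∈ Pset n, (if w p.2 < w p.1 then 1 else 0) := by
  rw [lenA, Pset, ← Finset.filter_filter, Finset.card_filter]

def psiQB {n : ℕ} (i j : Fin n) (p : Fin n × Fin n) : Fin n × Fin n :=
  if Equiv.swap i j p.1 < Equiv.swap i j p.2 then (Equiv.swap i j p.1, Equiv.swap i j p.2)
  else (Equiv.swap i j p.2, Equiv.swap i j p.1)

lemma psiQB_pos {n : ℕ} {i j : Fin n} {p : Fin n × Fin n}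
    (h : Equiv.swap i j p.1 < Equiv.swap i j p.2) :
    psiQB i j p = (Equiv.swap i j p.1, Equiv.swap i j p.2) := by rw [psiQB, if_pos h]

lemma psiQB_neg {n : ℕ} {i j : Fin n} {p : Fin n × Fin n}
    (h : ¬ Equiv.swap i j p.1 < Equiv.swap i j p.2) :
    psiQB i j p = (Equiv.swap i j p.2, Equiv.swap i j p.1) := by rw [psiQB, if_neg h]

lemma lenA_mul_swap_eq {n : ℕ} (w : Equiv.Perm (Fin n)) (i j : Fin n) :
    lenA (w * Equiv.swap i j) = ∑ p ∈ Pset n,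
      (if Equiv.swap i j p.2 < Equiv.swap i j p.1 then
        (if w p.2 < w p.1 then 0 else 1) else (if w p.2 < w p.1 then 1 else 0)) := by
  rw [lenA_eq_sum]
  have htne : ∀ {a b : Fin n}, a < b → Equiv.swap i j a ≠ Equiv.swap i j b := by
    intro a b hab h
    exact absurd ((Equiv.swap i j).injective h) (ne_of_lt hab)
  have hmem : ∀ p ∈ Pset n, psiQB i j p ∈ Pset n := by
    intro p hp
    rw [mem_Pset] at hp ⊢
    rw [psiQB]
    split
    · next h => exact h
    · next h => exact lt_of_le_of_ne (not_lt.1 h) (Ne.symm (htne hp))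
  have hinv : ∀ p ∈ Pset n, psiQB i j (psiQB i j p) = p := by
    intro p hp
    rw [mem_Pset] at hp
    by_cases h : Equiv.swap i j p.1 < Equiv.swap i j p.2
    · rw [psiQB_pos h, psiQB]
      simp only [Equiv.swap_apply_self]
      rw [if_pos hp]
    · rw [psiQB_neg h, psiQB]
      simp only [Equiv.swap_apply_self]
      rw [if_neg (not_lt.2 hp.le)]
  refine Finset.sum_nbij' (psiQB i j) (psiQB i j) hmem hmem hinv hinv ?_
  intro p hp
  rw [mem_Pset] at hp
  simp only [Equiv.Perm.mul_apply]
  by_cases h : Equiv.swap i j p.1 < Equiv.swap i j p.2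
  · rw [psiQB_pos h]
    simp only [Equiv.swap_apply_self]
    rw [if_neg (not_lt.2 hp.le)]
    exact rfl
  · have h' : Equiv.swap i j p.2 < Equiv.swap i j p.1 :=
      lt_of_le_of_ne (not_lt.1 h) (Ne.symm (htne hp))
    rw [psiQB_neg h]
    simp only [Equiv.swap_apply_self]
    rw [if_pos hp]
    have hwne : w (Equiv.swap i j p.2) ≠ w (Equiv.swap i j p.1) :=
      fun hh => absurd (w.injective hh) (ne_of_lt h')
    rcases lt_trichotomy (w (Equiv.swap i j p.2)) (w (Equiv.swap i j p.1)) with hc | hc | hc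
    · simp [hc, not_lt.2 hc.le]
    · exact absurd hc hwne
    · simp [hc, not_lt.2 hc.le]

lemma swap_flip_char {n : ℕ} (i j : Fin n) (hij : i < j) (a b : Fin n) :
    (a < b ∧ Equiv.swap i j b < Equiv.swap i j a) ↔
      ((a = i ∧ i < b ∧ b < j) ∨ (b = j ∧ i < a ∧ a < j) ∨ (a = i ∧ b = j)) := by
  constructor
  · rintro ⟨hab, hflip⟩
    by_cases hai : a = i
    · subst hai
      by_cases hbj : b = j
      · exact Or.inr (Or.inr ⟨rfl, hbj⟩)
      · have hbi : b ≠ a := ne_of_gt hab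
        rw [Equiv.swap_apply_left, Equiv.swap_apply_of_ne_of_ne hbi hbj] at hflip
        exact Or.inl ⟨rfl, hab, hflip⟩
    · by_cases haj : a = j
      · subst haj
        have hbj : b ≠ a := ne_of_gt hab
        have hbi : b ≠ i := ne_of_gt (lt_trans hij hab)
        rw [Equiv.swap_apply_right, Equiv.swap_apply_of_ne_of_ne hbi hbj] at hflip
        exact absurd (lt_trans hij hab) (not_lt.2 hflip.le)
      · rw [Equiv.swap_apply_of_ne_of_ne hai haj] at hflip
        by_cases hbi : b = i
        · subst hbi
          rw [Equiv.swap_apply_left] at hflip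
          exact absurd (lt_trans hab (lt_trans hij hflip)) (lt_irrefl a)
        · by_cases hbj : b = j
          · subst hbj
            rw [Equiv.swap_apply_right] at hflip
            exact Or.inr (Or.inl ⟨rfl, hflip, hab⟩)
          · rw [Equiv.swap_apply_of_ne_of_ne hbi hbj] at hflip
            exact absurd hab (not_lt.2 hflip.le)
  · rintro (⟨rfl, h1, h2⟩ | ⟨rfl, h1, h2⟩ | ⟨rfl, rfl⟩)
    · refine ⟨h1, ?_⟩
      rw [Equiv.swap_apply_left, Equiv.swap_apply_of_ne_of_ne (ne_of_gt h1) (ne_of_lt h2)]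
      exact h2
    · refine ⟨h2, ?_⟩
      rw [Equiv.swap_apply_right, Equiv.swap_apply_of_ne_of_ne (ne_of_gt h1) (ne_of_lt h2)]
      exact h1
    · refine ⟨hij, ?_⟩
      rw [Equiv.swap_apply_left, Equiv.swap_apply_right]
      exact hij

def Fset {n : ℕ} (i j : Fin n) : Finset (Fin n × Fin n) :=
  ((Finset.Ioo i j).image fun l => (i, l)) ∪ ((Finset.Ioo i j).image fun l => (l, j)) ∪ {(i, j)}

lemma filter_flip_eq {n : ℕ} (i j : Fin n) (hij : i < j) :
    (Pset n).filter (fun p => Equiv.swap i j p.2 < Equiv.swap i j p.1) = Fset i j := by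
  ext ⟨a, b⟩
  simp only [Pset, Fset, Finset.mem_filter, Finset.mem_univ, true_and, Finset.mem_union,
    Finset.mem_image, Finset.mem_Ioo, Finset.mem_singleton, Prod.mk.injEq, Prod.ext_iff]
  rw [show (a < b ∧ Equiv.swap i j b < Equiv.swap i j a) ↔ _ from swap_flip_char i j hij a b]
  constructor
  · rintro (⟨rfl, h1, h2⟩ | ⟨rfl, h1, h2⟩ | ⟨rfl, rfl⟩)
    · exact Or.inl (Or.inl ⟨b, ⟨h1, h2⟩, rfl, rfl⟩)
    · exact Or.inl (Or.inr ⟨a, ⟨h1, h2⟩, rfl, rfl⟩)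
    · exact Or.inr ⟨rfl, rfl⟩
  · rintro ((⟨l, ⟨h1, h2⟩, rfl, rfl⟩ | ⟨l, ⟨h1, h2⟩, rfl, rfl⟩) | ⟨rfl, rfl⟩)
    · exact Or.inl ⟨rfl, h1, h2⟩
    · exact Or.inr (Or.inl ⟨rfl, h1, h2⟩)
    · exact Or.inr (Or.inr ⟨rfl, rfl⟩)

lemma sum_Fset {n : ℕ} (i j : Fin n) (f : Fin n × Fin n → ℕ) :
    ∑ p ∈ Fset i j, f p =
      (∑ l ∈ Finset.Ioo i j, f (i, l)) + (∑ l ∈ Finset.Ioo i j, f (l, j)) + f (i, j) := by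
  have hinj1 : ∀ x ∈ Finset.Ioo i j, ∀ y ∈ Finset.Ioo i j,
      (fun l => ((i : Fin n), l)) x = (fun l => (i, l)) y → x = y := by
    intro x _ y _ h; exact (Prod.mk.injEq _ _ _ _ ▸ h).2
  have hinj2 : ∀ x ∈ Finset.Ioo i j, ∀ y ∈ Finset.Ioo i j,
      (fun l => (l, (j : Fin n))) x = (fun l => (l, j)) y → x = y := by
    intro x _ y _ h; exact (Prod.mk.injEq _ _ _ _ ▸ h).1
  have hd1 : Disjoint ((Finset.Ioo i j).image fun l => ((i : Fin n), l))
      ((Finset.Ioo i j).image fun l => (l, j)) := by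
    rw [Finset.disjoint_left]
    rintro p hp1 hp2
    simp only [Finset.mem_image, Finset.mem_Ioo] at hp1 hp2
    obtain ⟨l, ⟨hl1, _⟩, rfl⟩ := hp1
    obtain ⟨l', ⟨hl1', _⟩, h⟩ := hp2
    rw [Prod.mk.injEq] at h
    exact absurd (h.1 ▸ hl1') (lt_irrefl _)
  have hd2 : Disjoint (((Finset.Ioo i j).image fun l => ((i : Fin n), l)) ∪
      ((Finset.Ioo i j).image fun l => (l, j))) ({((i : Fin n), j)} : Finset _) := by
    rw [Finset.disjoint_right]
    intro p hp hp2
    simp only [Finset.mem_singleton] at hp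
    subst hp
    simp only [Finset.mem_union, Finset.mem_image, Finset.mem_Ioo, Prod.mk.injEq] at hp2
    rcases hp2 with ⟨l, ⟨_, hl2⟩, _, rfl⟩ | ⟨l, ⟨hl1, _⟩, rfl, _⟩
    · exact absurd hl2 (lt_irrefl _)
    · exact absurd hl1 (lt_irrefl _)
  rw [Fset, Finset.sum_union hd2, Finset.sum_union hd1, Finset.sum_image hinj1,
    Finset.sum_image hinj2, Finset.sum_singleton]

/-- The key length identity. -/
lemma key_identity {n : ℕ} (w : Equiv.Perm (Fin n)) (i j : Fin n) (hij : i < j) :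
    lenA (w * Equiv.swap i j) +
      2 * ((∑ l ∈ Finset.Ioo i j, (if w l < w i then 1 else 0)) +
           (∑ l ∈ Finset.Ioo i j, (if w j < w l then 1 else 0)) +
           (if w j < w i then 1 else 0))
    = lenA w + (2 * ((j : ℕ) - (i : ℕ)) - 1) := by
  have hcard : (Finset.Ioo i j).card = (j : ℕ) - (i : ℕ) - 1 := Fin.card_Ioo i j
  -- msum over Pset
  have hm : (∑ p ∈ Pset n, (if Equiv.swap i j p.2 < Equiv.swap i j p.1 then
        (if w p.2 < w p.1 then 1 else 0) else 0)) =
      (∑ l ∈ Finset.Ioo i j, (if w l < w i then 1 else 0)) +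
           (∑ l ∈ Finset.Ioo i j, (if w j < w l then 1 else 0)) +
           (if w j < w i then 1 else 0) := by
    rw [← Finset.sum_filter, filter_flip_eq i j hij, sum_Fset]
  have hc : (2 * ((j : ℕ) - (i : ℕ)) - 1) =
      ∑ p ∈ Pset n, (if Equiv.swap i j p.2 < Equiv.swap i j p.1 then 1 else 0) := by
    rw [← Finset.card_filter, filter_flip_eq i j hij]
    have : (Fset i j).card = ∑ p ∈ Fset i j, 1 := by
      rw [Finset.card_eq_sum_ones]
    rw [this, sum_Fset]
    simp only [Finset.sum_const, smul_eq_mul, mul_one, hcard]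
    have : (i : ℕ) < (j : ℕ) := hij
    omega
  rw [← hm, hc, lenA_mul_swap_eq, lenA_eq_sum w, Finset.mul_sum, ← Finset.sum_add_distrib,
    ← Finset.sum_add_distrib]
  apply Finset.sum_congr rfl
  intro p _
  split_ifs <;> omega
/-- For `w ∈ S_n` and `i < j`, there is an edge `w → w·(i,j)` in the
type `A_{n-1}` quantum Bruhat graph if and only if there is no `l` with `i < l < j`
and `w(i) ≺ w(l) ≺ w(j)` in the circular order starting at `w(i)`. -/
theorem stmt0 {n : ℕ} (w : Equiv.Perm (Fin n)) (i j : Fin n) (hij : i < j) :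
    edgeA w i j ↔ ¬ ∃ l : Fin n, i < l ∧ l < j ∧ circB (w i) (w l) (w j) := by
  have hijv : (i : ℕ) < (j : ℕ) := hij
  have key := key_identity w i j hij
  have hcard : (Finset.Ioo i j).card = (j : ℕ) - (i : ℕ) - 1 := Fin.card_Ioo i j
  have hsum : (∑ l ∈ Finset.Ioo i j, (if w l < w i then 1 else 0)) +
      (∑ l ∈ Finset.Ioo i j, (if w j < w l then 1 else 0)) =
      ∑ l ∈ Finset.Ioo i j, ((if w l < w i then 1 else 0) + (if w j < w l then 1 else 0)) :=
    Finset.sum_add_distrib.symm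
  rw [hsum] at key
  have hex : (¬ ∃ l : Fin n, i < l ∧ l < j ∧ circB (w i) (w l) (w j)) ↔
      ∀ l ∈ Finset.Ioo i j, ¬ circB (w i) (w l) (w j) := by
    push_neg
    constructor
    · intro h l hl
      rw [Finset.mem_Ioo] at hl
      exact h l hl.1 hl.2
    · intro h l h1 h2
      exact h l (by rw [Finset.mem_Ioo]; exact ⟨h1, h2⟩)
  rw [hex]
  have hvne : ∀ l : Fin n, i < l → l < j → (w l).val ≠ (w i).val ∧ (w l).val ≠ (w j).val := by
    intro l h1 h2
    constructor
    · intro h; exact absurd (w.injective (Fin.ext h)) (ne_of_gt h1)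
    · intro h; exact absurd (w.injective (Fin.ext h)) (ne_of_lt h2)
  have hwij : (w i).val ≠ (w j).val :=
    fun h => absurd (w.injective (Fin.ext h)) (ne_of_lt hij)
  rcases Nat.lt_or_ge (w i).val (w j).val with hwc | hwc
  · -- case w i < w j
    have hneg : ¬ (w j < w i) := by rw [Fin.lt_def]; omega
    rw [if_neg hneg, add_zero] at key
    have hTle : ∀ l ∈ Finset.Ioo i j,
        ((if w l < w i then 1 else 0) + (if w j < w l then 1 else 0)) ≤ 1 := by
      intro l hl
      rw [Finset.mem_Ioo] at hl
      obtain ⟨h1, h2⟩ := hvne l hl.1 hl.2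
      simp only [Fin.lt_def]
      split_ifs <;> omega
    have hTiff : ∀ l ∈ Finset.Ioo i j,
        (((if w l < w i then 1 else 0) + (if w j < w l then 1 else 0)) = 1 ↔
          ¬ circB (w i) (w l) (w j)) := by
      intro l hl
      rw [Finset.mem_Ioo] at hl
      obtain ⟨h1, h2⟩ := hvne l hl.1 hl.2
      have hb := (w l).isLt
      have ha := (w i).isLt
      have hc := (w j).isLt
      rw [circB_char]
      simp only [Fin.lt_def]
      split_ifs <;> omega
    have hmax : (∑ l ∈ Finset.Ioo i j,
        ((if w l < w i then 1 else 0) + (if w j < w l then 1 else 0))) ≤ (j:ℕ) - (i:ℕ) - 1 := by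
      calc (∑ l ∈ Finset.Ioo i j,
          ((if w l < w i then 1 else 0) + (if w j < w l then 1 else 0)))
          ≤ (Finset.Ioo i j).card • 1 := Finset.sum_le_card_nsmul _ _ 1 hTle
        _ = (j:ℕ) - (i:ℕ) - 1 := by rw [hcard, smul_eq_mul, mul_one]
    have hall : (∑ l ∈ Finset.Ioo i j,
        ((if w l < w i then 1 else 0) + (if w j < w l then 1 else 0))) = (j:ℕ) - (i:ℕ) - 1 ↔
        ∀ l ∈ Finset.Ioo i j, ¬ circB (w i) (w l) (w j) := by
      have h1 := Finset.sum_eq_sum_iff_of_le hTle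
      rw [Finset.sum_const, smul_eq_mul, mul_one, hcard] at h1
      rw [h1]
      exact forall_congr' fun l => forall_congr' fun hl => hTiff l hl
    rw [← hall]
    rw [edgeA, bEdgeA, qEdgeA]
    constructor
    · rintro (⟨-, hlen⟩ | ⟨-, hlen⟩) <;> omega
    · intro h
      exact Or.inl ⟨hij, by omega⟩
  · -- case w j < w i
    have hwc' : (w j).val < (w i).val := by omega
    have hpos : (w j < w i) := by rw [Fin.lt_def]; omega
    rw [if_pos hpos] at key
    have hTle : ∀ l ∈ Finset.Ioo i j,
        ((if w l < w i then 1 else 0) + (if w j < w l then 1 else 0)) ≤ 2 := by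
      intro l hl
      split_ifs <;> omega
    have hTge : ∀ l ∈ Finset.Ioo i j,
        1 ≤ ((if w l < w i then 1 else 0) + (if w j < w l then 1 else 0)) := by
      intro l hl
      rw [Finset.mem_Ioo] at hl
      obtain ⟨h1, h2⟩ := hvne l hl.1 hl.2
      simp only [Fin.lt_def]
      split_ifs <;> omega
    have hTiff : ∀ l ∈ Finset.Ioo i j,
        (((if w l < w i then 1 else 0) + (if w j < w l then 1 else 0)) = 2 ↔
          ¬ circB (w i) (w l) (w j)) := by
      intro l hl
      rw [Finset.mem_Ioo] at hl
      obtain ⟨h1, h2⟩ := hvne l hl.1 hl.2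
      have hb := (w l).isLt
      have ha := (w i).isLt
      have hc := (w j).isLt
      rw [circB_char]
      simp only [Fin.lt_def]
      split_ifs <;> omega
    have hmin : (j:ℕ) - (i:ℕ) - 1 ≤ (∑ l ∈ Finset.Ioo i j,
        ((if w l < w i then 1 else 0) + (if w j < w l then 1 else 0))) := by
      calc (j:ℕ) - (i:ℕ) - 1 = (Finset.Ioo i j).card • 1 := by rw [hcard, smul_eq_mul, mul_one]
        _ ≤ _ := Finset.card_nsmul_le_sum _ _ 1 hTge
    have hall : (∑ l ∈ Finset.Ioo i j,
        ((if w l < w i then 1 else 0) + (if w j < w l then 1 else 0))) =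
          2 * ((j:ℕ) - (i:ℕ) - 1) ↔
        ∀ l ∈ Finset.Ioo i j, ¬ circB (w i) (w l) (w j) := by
      have h1 := Finset.sum_eq_sum_iff_of_le hTle
      rw [Finset.sum_const, smul_eq_mul, hcard] at h1
      rw [show 2 * ((j:ℕ) - (i:ℕ) - 1) = ((j:ℕ) - (i:ℕ) - 1) * 2 from mul_comm _ _, h1]
      exact forall_congr' fun l => forall_congr' fun hl => hTiff l hl
    rw [← hall]
    rw [edgeA, bEdgeA, qEdgeA]
    constructor
    · rintro (⟨-, hlen⟩ | ⟨-, hlen⟩) <;> omega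
    · intro h
      exact Or.inr ⟨hij, by omega⟩
end
end

section
/- Fix n and k with 1 ≤ k ≤ n-1, and let Γ_v := { (i,j) : i ≤ k < j ≤ n and v → v·(i,j) is a quantum edge in QB(S_n) }, for v ∈ S_n. Define (a,b) ⪯ (c,d) iff c ≤ a ≤ k < b ≤ d. Then Γ_v, whenever nonempty, has a unique maximum and a unique minimum with respect to ⪯. More specifically: if (p,q) and (r,s) belong to Γ_v with p < r ≤ k < q < s, then (p,s) and (r,q) also belong to Γ_v. -/
open scoped Classical

noncomputable section

/-- `mid k i j`: the (0-indexed) pair `(i,j)` corresponds to a 1-indexed pair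
`(i+1, j+1)` with `i+1 ≤ k < j+1`. -/
def midA {n : ℕ} (k : ℕ) (i j : Fin n) : Prop := (i : ℕ) < k ∧ k ≤ (j : ℕ)

/-- The set `Γ_v` of pairs `(i,j)` with `i ≤ k < j` (1-indexed) such that
`v → v·(i,j)` is a quantum edge of `QB(S_n)`. -/
def GammaSet {n : ℕ} (k : ℕ) (v : Equiv.Perm (Fin n)) : Set (Fin n × Fin n) :=
  {p | midA k p.1 p.2 ∧ qEdgeA v p.1 p.2}

/-- The partial order `(a,b) ⪯ (c,d) ↔ c ≤ a ≤ k < b ≤ d` (1-indexed). -/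
def preA {n : ℕ} (k : ℕ) (p q : Fin n × Fin n) : Prop :=
  q.1 ≤ p.1 ∧ (p.1 : ℕ) < k ∧ k ≤ (p.2 : ℕ) ∧ p.2 ≤ q.2

/-- `m` is the maximum of `S` with respect to `⪯`. -/
def isMaxOf {n : ℕ} (k : ℕ) (S : Set (Fin n × Fin n)) (m : Fin n × Fin n) : Prop :=
  m ∈ S ∧ ∀ x ∈ S, preA k x m

/-- `m` is the minimum of `S` with respect to `⪯`. -/
def isMinOf {n : ℕ} (k : ℕ) (S : Set (Fin n × Fin n)) (m : Fin n × Fin n) : Prop :=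
  m ∈ S ∧ ∀ x ∈ S, preA k m x

/-- `QPathA k w L`: `L` is the list of labels of a directed path in `QB(S_n)`
starting at `w`, all of whose labels `(i,j)` satisfy `i ≤ k < j` (1-indexed) and all
of whose steps are quantum edges. -/
def QPathA {n : ℕ} (k : ℕ) : Equiv.Perm (Fin n) → List (Fin n × Fin n) → Prop
  | _, [] => True
  | w, p :: L => midA k p.1 p.2 ∧ qEdgeA w p.1 p.2 ∧ QPathA k (w * Equiv.swap p.1 p.2) L


lemma swap_reversal_set {n : ℕ} (i j : Fin n) (hij : i < j) :
    (Finset.univ.filter (fun p : Fin n × Fin n =>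
        p.1 < p.2 ∧ Equiv.swap i j p.2 < Equiv.swap i j p.1)) =
    insert (i, j) (((Finset.Ioo i j).image (fun l => (i, l))) ∪
      ((Finset.Ioo i j).image (fun l => (l, j)))) := by
  have hne : i ≠ j := ne_of_lt hij
  ext p
  obtain ⟨a, b⟩ := p
  simp only [Finset.mem_filter, Finset.mem_univ, true_and, Finset.mem_insert,
    Finset.mem_union, Finset.mem_image, Finset.mem_Ioo, Prod.mk.injEq]
  constructor
  · rintro ⟨hab, hrev⟩
    by_cases hai : a = i <;> by_cases hbj : b = j
    · exact Or.inl ⟨hai, hbj⟩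
    · rw [hai] at hab hrev
      have hbi : b ≠ i := (ne_of_gt hab)
      rw [Equiv.swap_apply_left, Equiv.swap_apply_of_ne_of_ne hbi hbj] at hrev
      exact Or.inr (Or.inl ⟨b, ⟨hab, hrev⟩, hai.symm, rfl⟩)
    · rw [hbj] at hab hrev
      have haj : a ≠ j := ne_of_lt hab
      rw [Equiv.swap_apply_right, Equiv.swap_apply_of_ne_of_ne hai haj] at hrev
      exact Or.inr (Or.inr ⟨a, ⟨hrev, hab⟩, rfl, hbj.symm⟩)
    · by_cases hbi : b = i
      · rw [hbi] at hab hrev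
        have haj : a ≠ j := ne_of_lt (lt_trans hab hij)
        rw [Equiv.swap_apply_left, Equiv.swap_apply_of_ne_of_ne hai haj] at hrev
        exact absurd (lt_trans hrev (lt_trans hab hij)) (lt_irrefl _)
      · by_cases haj : a = j
        · rw [haj] at hab hrev
          rw [Equiv.swap_apply_right, Equiv.swap_apply_of_ne_of_ne hbi hbj] at hrev
          exact absurd (lt_trans hrev (lt_trans hij hab)) (lt_irrefl _)
        · rw [Equiv.swap_apply_of_ne_of_ne hai haj,
            Equiv.swap_apply_of_ne_of_ne hbi hbj] at hrev
          exact absurd hab (not_lt.mpr (le_of_lt hrev))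
  · rintro (⟨rfl, rfl⟩ | ⟨l, ⟨hl1, hl2⟩, rfl, rfl⟩ | ⟨l, ⟨hl1, hl2⟩, rfl, rfl⟩)
    · rw [Equiv.swap_apply_left, Equiv.swap_apply_right]; exact ⟨hij, hij⟩
    · rw [Equiv.swap_apply_left,
        Equiv.swap_apply_of_ne_of_ne (ne_of_gt hl1) (ne_of_lt hl2)]
      exact ⟨hl1, hl2⟩
    · rw [Equiv.swap_apply_right,
        Equiv.swap_apply_of_ne_of_ne (ne_of_gt hl1) (ne_of_lt hl2)]
      exact ⟨hl2, hl1⟩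

lemma cR_eq {n : ℕ} (u : Equiv.Perm (Fin n)) (i j : Fin n) (hij : i < j) :
    (Finset.univ.filter (fun p : Fin n × Fin n =>
        (p.1 < p.2 ∧ u p.2 < u p.1) ∧ Equiv.swap i j p.2 < Equiv.swap i j p.1)).card =
    (if u j < u i then 1 else 0)
      + ((Finset.Ioo i j).filter (fun l => u l < u i)).card
      + ((Finset.Ioo i j).filter (fun l => u j < u l)).card := by
  have h1 : (Finset.univ.filter (fun p : Fin n × Fin n =>
        (p.1 < p.2 ∧ u p.2 < u p.1) ∧ Equiv.swap i j p.2 < Equiv.swap i j p.1)) =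
      (Finset.univ.filter (fun p : Fin n × Fin n =>
        p.1 < p.2 ∧ Equiv.swap i j p.2 < Equiv.swap i j p.1)).filter
        (fun p => u p.2 < u p.1) := by
    rw [Finset.filter_filter]
    apply Finset.filter_congr
    intro p _
    tauto
  rw [h1, swap_reversal_set i j hij, Finset.filter_insert, Finset.filter_union,
    Finset.filter_image, Finset.filter_image]
  have hinj1 : Function.Injective (fun l : Fin n => ((i, l) : Fin n × Fin n)) := by
    intro x y h; simpa using h
  have hinj2 : Function.Injective (fun l : Fin n => ((l, j) : Fin n × Fin n)) := by
    intro x y h; simpa using h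
  have hdisj : Disjoint
      (((Finset.Ioo i j).filter fun l => u l < u i).image (fun l => ((i, l) : Fin n × Fin n)))
      (((Finset.Ioo i j).filter fun l => u j < u l).image (fun l => ((l, j) : Fin n × Fin n))) := by
    rw [Finset.disjoint_left]
    rintro p hp1 hp2
    simp only [Finset.mem_image, Finset.mem_filter, Finset.mem_Ioo] at hp1 hp2
    obtain ⟨x, ⟨⟨hx1, hx2⟩, _⟩, rfl⟩ := hp1
    obtain ⟨y, ⟨⟨hy1, hy2⟩, _⟩, heq⟩ := hp2
    have : y = i := congrArg Prod.fst heq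
    exact absurd (this ▸ hy1) (lt_irrefl _)
  have hnotmem : ((i, j) : Fin n × Fin n) ∉
      (((Finset.Ioo i j).filter fun l => u l < u i).image (fun l => ((i, l) : Fin n × Fin n)))
      ∪ (((Finset.Ioo i j).filter fun l => u j < u l).image (fun l => ((l, j) : Fin n × Fin n))) := by
    rw [Finset.mem_union]
    rintro (h | h) <;>
      simp only [Finset.mem_image, Finset.mem_filter, Finset.mem_Ioo, Prod.mk.injEq] at h
    · obtain ⟨x, ⟨⟨hx1, hx2⟩, _⟩, _, rfl⟩ := h
      exact absurd hx2 (lt_irrefl _)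
    · obtain ⟨x, ⟨⟨hx1, hx2⟩, _⟩, rfl, _⟩ := h
      exact absurd hx1 (lt_irrefl _)
  split_ifs with hd
  · rw [Finset.card_insert_of_notMem hnotmem, Finset.card_union_of_disjoint hdisj,
      Finset.card_image_of_injective _ hinj1, Finset.card_image_of_injective _ hinj2]
    ring
  · rw [Finset.card_union_of_disjoint hdisj,
      Finset.card_image_of_injective _ hinj1, Finset.card_image_of_injective _ hinj2]
    ring

lemma nonrev_card_eq {n : ℕ} (w : Equiv.Perm (Fin n)) (i j : Fin n) :
    (Finset.univ.filter (fun p : Fin n × Fin n =>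
        (p.1 < p.2 ∧ (w * Equiv.swap i j) p.2 < (w * Equiv.swap i j) p.1) ∧
          ¬ Equiv.swap i j p.2 < Equiv.swap i j p.1)).card =
    (Finset.univ.filter (fun p : Fin n × Fin n =>
        (p.1 < p.2 ∧ w p.2 < w p.1) ∧ ¬ Equiv.swap i j p.2 < Equiv.swap i j p.1)).card := by
  apply Finset.card_bij' (fun p _ => (Equiv.swap i j p.1, Equiv.swap i j p.2))
      (fun p _ => (Equiv.swap i j p.1, Equiv.swap i j p.2))
  · rintro ⟨a, b⟩ ha
    rw [Finset.mem_filter] at ha ⊢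
    simp only [Finset.mem_filter, Finset.mem_univ, true_and, Equiv.Perm.mul_apply] at ha ⊢
    obtain ⟨⟨hab, hinv⟩, hnr⟩ := ha
    have hlt : Equiv.swap i j a < Equiv.swap i j b := by
      rcases lt_trichotomy (Equiv.swap i j a) (Equiv.swap i j b) with h | h | h
      · exact h
      · exact absurd ((Equiv.swap i j).injective h) (ne_of_lt hab)
      · exact absurd h hnr
    refine ⟨⟨hlt, ?_⟩, ?_⟩
    · exact hinv
    · simp only [Equiv.swap_apply_self]
      exact not_lt.mpr (le_of_lt hab)
  · rintro ⟨a, b⟩ ha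
    rw [Finset.mem_filter] at ha ⊢
    simp only [Finset.mem_filter, Finset.mem_univ, true_and, Equiv.Perm.mul_apply] at ha ⊢
    obtain ⟨⟨hab, hinv⟩, hnr⟩ := ha
    have hlt : Equiv.swap i j a < Equiv.swap i j b := by
      rcases lt_trichotomy (Equiv.swap i j a) (Equiv.swap i j b) with h | h | h
      · exact h
      · exact absurd ((Equiv.swap i j).injective h) (ne_of_lt hab)
      · exact absurd h hnr
    refine ⟨⟨hlt, ?_⟩, ?_⟩
    · simpa [Equiv.swap_apply_self] using hinv
    · simp only [Equiv.swap_apply_self]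
      exact not_lt.mpr (le_of_lt hab)
  · rintro ⟨a, b⟩ _; simp [Equiv.swap_apply_self]
  · rintro ⟨a, b⟩ _; simp [Equiv.swap_apply_self]

lemma lenA_split {n : ℕ} (u : Equiv.Perm (Fin n)) (i j : Fin n) :
    lenA u =
      (Finset.univ.filter (fun p : Fin n × Fin n =>
        (p.1 < p.2 ∧ u p.2 < u p.1) ∧ Equiv.swap i j p.2 < Equiv.swap i j p.1)).card +
      (Finset.univ.filter (fun p : Fin n × Fin n =>
        (p.1 < p.2 ∧ u p.2 < u p.1) ∧ ¬ Equiv.swap i j p.2 < Equiv.swap i j p.1)).card := by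
  have h := Finset.card_filter_add_card_filter_not
    (s := Finset.univ.filter (fun p : Fin n × Fin n => p.1 < p.2 ∧ u p.2 < u p.1))
    (p := fun p => Equiv.swap i j p.2 < Equiv.swap i j p.1)
  rw [Finset.filter_filter, Finset.filter_filter] at h
  exact h.symm

lemma len_descent {n : ℕ} (w : Equiv.Perm (Fin n)) (i j : Fin n) (hij : i < j)
    (hd : w j < w i) :
    lenA (w * Equiv.swap i j) + 1 +
      2 * ((Finset.Ioo i j).filter (fun l => w j < w l ∧ w l < w i)).card = lenA w := by
  have hwt_i : (w * Equiv.swap i j) i = w j := by simp [Equiv.Perm.mul_apply]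
  have hwt_j : (w * Equiv.swap i j) j = w i := by simp [Equiv.Perm.mul_apply]
  have hfilter1 : ((Finset.Ioo i j).filter (fun l => (w * Equiv.swap i j) l < (w * Equiv.swap i j) i))
      = ((Finset.Ioo i j).filter (fun l => w l < w j)) := by
    apply Finset.filter_congr
    intro l hl
    rw [Finset.mem_Ioo] at hl
    rw [hwt_i, Equiv.Perm.mul_apply,
      Equiv.swap_apply_of_ne_of_ne (ne_of_gt hl.1) (ne_of_lt hl.2)]
  have hfilter2 : ((Finset.Ioo i j).filter (fun l => (w * Equiv.swap i j) j < (w * Equiv.swap i j) l))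
      = ((Finset.Ioo i j).filter (fun l => w i < w l)) := by
    apply Finset.filter_congr
    intro l hl
    rw [Finset.mem_Ioo] at hl
    rw [hwt_j, Equiv.Perm.mul_apply,
      Equiv.swap_apply_of_ne_of_ne (ne_of_gt hl.1) (ne_of_lt hl.2)]
  have e1 := lenA_split w i j
  have e2 := lenA_split (w * Equiv.swap i j) i j
  rw [cR_eq w i j hij, if_pos hd] at e1
  rw [cR_eq (w * Equiv.swap i j) i j hij, hfilter1, hfilter2, hwt_i, hwt_j,
    if_neg (not_lt.mpr (le_of_lt hd)), nonrev_card_eq] at e2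
  -- pointwise counting identity over Ioo i j
  have key : ((Finset.Ioo i j).filter (fun l => w l < w j)).card
      + ((Finset.Ioo i j).filter (fun l => w i < w l)).card
      + 2 * ((Finset.Ioo i j).filter (fun l => w j < w l ∧ w l < w i)).card
      = ((Finset.Ioo i j).filter (fun l => w l < w i)).card
      + ((Finset.Ioo i j).filter (fun l => w j < w l)).card := by
    rw [Finset.card_filter, Finset.card_filter, Finset.card_filter, Finset.card_filter,
      Finset.card_filter, ← Finset.sum_add_distrib, Finset.mul_sum, ← Finset.sum_add_distrib,
      ← Finset.sum_add_distrib]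
    apply Finset.sum_congr rfl
    intro l hl
    rw [Finset.mem_Ioo] at hl
    have h1 : w l ≠ w i := w.injective.ne (ne_of_gt hl.1)
    have h2 : w l ≠ w j := w.injective.ne (ne_of_lt hl.2)
    have h1' : (w l : ℕ) ≠ (w i : ℕ) := fun h => h1 (Fin.ext h)
    have h2' : (w l : ℕ) ≠ (w j : ℕ) := fun h => h2 (Fin.ext h)
    simp only [Fin.lt_iff_val_lt_val]
    split_ifs <;> omega
  omega

lemma len_ascent {n : ℕ} (w : Equiv.Perm (Fin n)) (i j : Fin n) (hij : i < j)
    (hd : w i < w j) :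
    lenA (w * Equiv.swap i j) = lenA w + 1 +
      2 * ((Finset.Ioo i j).filter (fun l => w i < w l ∧ w l < w j)).card := by
  have hwt_i : (w * Equiv.swap i j) i = w j := by simp [Equiv.Perm.mul_apply]
  have hwt_j : (w * Equiv.swap i j) j = w i := by simp [Equiv.Perm.mul_apply]
  have hfilter1 : ((Finset.Ioo i j).filter (fun l => (w * Equiv.swap i j) l < (w * Equiv.swap i j) i))
      = ((Finset.Ioo i j).filter (fun l => w l < w j)) := by
    apply Finset.filter_congr
    intro l hl
    rw [Finset.mem_Ioo] at hl
    rw [hwt_i, Equiv.Perm.mul_apply,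
      Equiv.swap_apply_of_ne_of_ne (ne_of_gt hl.1) (ne_of_lt hl.2)]
  have hfilter2 : ((Finset.Ioo i j).filter (fun l => (w * Equiv.swap i j) j < (w * Equiv.swap i j) l))
      = ((Finset.Ioo i j).filter (fun l => w i < w l)) := by
    apply Finset.filter_congr
    intro l hl
    rw [Finset.mem_Ioo] at hl
    rw [hwt_j, Equiv.Perm.mul_apply,
      Equiv.swap_apply_of_ne_of_ne (ne_of_gt hl.1) (ne_of_lt hl.2)]
  have e1 := lenA_split w i j
  have e2 := lenA_split (w * Equiv.swap i j) i j
  rw [cR_eq w i j hij, if_neg (not_lt.mpr (le_of_lt hd))] at e1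
  rw [cR_eq (w * Equiv.swap i j) i j hij, hfilter1, hfilter2, hwt_i, hwt_j,
    if_pos hd, nonrev_card_eq] at e2
  have key : ((Finset.Ioo i j).filter (fun l => w l < w j)).card
      + ((Finset.Ioo i j).filter (fun l => w i < w l)).card
      = ((Finset.Ioo i j).filter (fun l => w l < w i)).card
      + ((Finset.Ioo i j).filter (fun l => w j < w l)).card
      + 2 * ((Finset.Ioo i j).filter (fun l => w i < w l ∧ w l < w j)).card := by
    rw [Finset.card_filter, Finset.card_filter, Finset.card_filter, Finset.card_filter,
      Finset.card_filter, ← Finset.sum_add_distrib, Finset.mul_sum, ← Finset.sum_add_distrib,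
      ← Finset.sum_add_distrib]
    apply Finset.sum_congr rfl
    intro l hl
    rw [Finset.mem_Ioo] at hl
    have h1 : w l ≠ w i := w.injective.ne (ne_of_gt hl.1)
    have h2 : w l ≠ w j := w.injective.ne (ne_of_lt hl.2)
    have h1' : (w l : ℕ) ≠ (w i : ℕ) := fun h => h1 (Fin.ext h)
    have h2' : (w l : ℕ) ≠ (w j : ℕ) := fun h => h2 (Fin.ext h)
    simp only [Fin.lt_iff_val_lt_val]
    split_ifs <;> omega
  omega

lemma qEdgeA_iff {n : ℕ} (v : Equiv.Perm (Fin n)) (i j : Fin n) :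
    qEdgeA v i j ↔ i < j ∧ v j < v i ∧ ∀ l, i < l → l < j → v j < v l ∧ v l < v i := by
  constructor
  · rintro ⟨hij, heq⟩
    have hijn : (i : ℕ) < (j : ℕ) := hij
    rcases lt_trichotomy (v i) (v j) with hd | hd | hd
    · exfalso
      rw [len_ascent v i j hij hd] at heq
      omega
    · exact absurd (v.injective hd) (ne_of_lt hij)
    · refine ⟨hij, hd, ?_⟩
      have hde := len_descent v i j hij hd
      have hC : ((Finset.Ioo i j).filter (fun l => v j < v l ∧ v l < v i)).card
          = (j : ℕ) - (i : ℕ) - 1 := by omega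
      have hcard : (Finset.Ioo i j).card = (j : ℕ) - (i : ℕ) - 1 := Fin.card_Ioo i j
      have hset : (Finset.Ioo i j).filter (fun l => v j < v l ∧ v l < v i)
          = Finset.Ioo i j := by
        apply Finset.eq_of_subset_of_card_le (Finset.filter_subset _ _)
        omega
      intro l hl1 hl2
      have hmem : l ∈ (Finset.Ioo i j).filter (fun l => v j < v l ∧ v l < v i) := by
        rw [hset]; exact Finset.mem_Ioo.mpr ⟨hl1, hl2⟩
      exact (Finset.mem_filter.mp hmem).2
  · rintro ⟨hij, hd, hall⟩
    have hijn : (i : ℕ) < (j : ℕ) := hij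
    refine ⟨hij, ?_⟩
    have hde := len_descent v i j hij hd
    have hC : ((Finset.Ioo i j).filter (fun l => v j < v l ∧ v l < v i)) = Finset.Ioo i j := by
      apply Finset.filter_true_of_mem
      intro l hl
      rw [Finset.mem_Ioo] at hl
      exact hall l hl.1 hl.2
    rw [hC, Fin.card_Ioo] at hde
    omega

lemma gamma_closure {n : ℕ} {k : ℕ} (v : Equiv.Perm (Fin n)) {x y : Fin n × Fin n}
    (hx : x ∈ GammaSet k v) (hy : y ∈ GammaSet k v) (h1 : x.1 < y.1) (h2 : x.2 < y.2) :
    (x.1, y.2) ∈ GammaSet k v ∧ (y.1, x.2) ∈ GammaSet k v := by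
  obtain ⟨⟨hp, hq⟩, hxq⟩ := hx
  obtain ⟨⟨hr, hs⟩, hyq⟩ := hy
  rw [qEdgeA_iff] at hxq hyq
  obtain ⟨hpq, hvqp, hQ⟩ := hxq
  obtain ⟨hrs, hvsr, hR⟩ := hyq
  have hrq : y.1 < x.2 := by rw [Fin.lt_def]; omega
  have hq_r := hQ y.1 h1 hrq
  have hs_q := hR x.2 hrq h2
  constructor
  · refine ⟨⟨hp, hs⟩, ?_⟩
    rw [qEdgeA_iff]
    refine ⟨lt_trans hpq h2, lt_trans hs_q.1 (lt_trans hq_r.1 hq_r.2), ?_⟩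
    intro l hl1 hl2
    rcases lt_trichotomy l x.2 with hlq | hlq | hlq
    · have h := hQ l hl1 hlq
      exact ⟨lt_trans hs_q.1 h.1, h.2⟩
    · subst hlq
      exact ⟨hs_q.1, lt_trans hq_r.1 hq_r.2⟩
    · have h := hR l (lt_trans hrq hlq) hl2
      exact ⟨h.1, lt_trans h.2 hq_r.2⟩
  · refine ⟨⟨hr, hq⟩, ?_⟩
    rw [qEdgeA_iff]
    refine ⟨hrq, hq_r.1, ?_⟩
    intro l hl1 hl2
    exact ⟨(hQ l (lt_trans h1 hl1) hl2).1, (hR l hl1 (lt_trans hl2 h2)).2⟩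

theorem stmt8' {n k : ℕ} (hk1 : 1 ≤ k) (hk2 : k ≤ n - 1) (v : Equiv.Perm (Fin n)) :
    ((GammaSet k v).Nonempty →
      (∃! m : Fin n × Fin n, isMaxOf k (GammaSet k v) m) ∧
      (∃! m : Fin n × Fin n, isMinOf k (GammaSet k v) m)) ∧
    (∀ x y : Fin n × Fin n, x ∈ GammaSet k v → y ∈ GammaSet k v →
      x.1 < y.1 → x.2 < y.2 → (x.1, y.2) ∈ GammaSet k v ∧ (y.1, x.2) ∈ GammaSet k v) := by
  constructor
  · intro hne
    set F : Finset (Fin n × Fin n) := Finset.univ.filter (fun p => p ∈ GammaSet k v) with hF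
    have hmemF : ∀ p : Fin n × Fin n, p ∈ F ↔ p ∈ GammaSet k v := by
      intro p; simp [hF]
    have hFne : F.Nonempty := by
      obtain ⟨x, hx⟩ := hne
      exact ⟨x, (hmemF x).mpr hx⟩
    constructor
    · -- maximum
      obtain ⟨m1, hm1, hmin1⟩ := F.exists_min_image Prod.fst hFne
      obtain ⟨m2, hm2, hmax2⟩ := F.exists_max_image Prod.snd hFne
      have hm1' := (hmemF m1).mp hm1
      have hm2' := (hmemF m2).mp hm2
      have hmem : (m1.1, m2.2) ∈ GammaSet k v := by
        rcases eq_or_lt_of_le (hmin1 m2 hm2) with heq | hlt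
        · have : (m1.1, m2.2) = m2 := by rw [heq]
          rw [this]; exact hm2'
        · rcases eq_or_lt_of_le (hmax2 m1 hm1) with heq | hlt2
          · have : (m1.1, m2.2) = m1 := by rw [← heq]
            rw [this]; exact hm1'
          · exact (gamma_closure v hm1' hm2' hlt hlt2).1
      have hub : ∀ x ∈ GammaSet k v, preA k x (m1.1, m2.2) := by
        intro x hx
        exact ⟨hmin1 x ((hmemF x).mpr hx), hx.1.1, hx.1.2, hmax2 x ((hmemF x).mpr hx)⟩
      refine ⟨(m1.1, m2.2), ⟨hmem, hub⟩, ?_⟩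
      rintro y ⟨hymem, hyub⟩
      have h1 := hyub (m1.1, m2.2) hmem
      have h2 := hub y hymem
      exact Prod.ext (le_antisymm h1.1 h2.1) (le_antisymm h2.2.2.2 h1.2.2.2)
    · -- minimum
      obtain ⟨m1, hm1, hmax1⟩ := F.exists_max_image Prod.fst hFne
      obtain ⟨m2, hm2, hmin2⟩ := F.exists_min_image Prod.snd hFne
      have hm1' := (hmemF m1).mp hm1
      have hm2' := (hmemF m2).mp hm2
      have hmem : (m1.1, m2.2) ∈ GammaSet k v := by
        rcases eq_or_lt_of_le (hmax1 m2 hm2) with heq | hlt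
        · have : (m1.1, m2.2) = m2 := by rw [← heq]
          rw [this]; exact hm2'
        · rcases eq_or_lt_of_le (hmin2 m1 hm1) with heq | hlt2
          · have : (m1.1, m2.2) = m1 := by rw [heq]
            rw [this]; exact hm1'
          · exact (gamma_closure v hm2' hm1' hlt hlt2).2
      have hlb : ∀ x ∈ GammaSet k v, preA k (m1.1, m2.2) x := by
        intro x hx
        exact ⟨hmax1 x ((hmemF x).mpr hx), hmem.1.1, hmem.1.2, hmin2 x ((hmemF x).mpr hx)⟩
      refine ⟨(m1.1, m2.2), ⟨hmem, hlb⟩, ?_⟩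
      rintro y ⟨hymem, hylb⟩
      have h1 := hylb (m1.1, m2.2) hmem
      have h2 := hlb y hymem
      exact Prod.ext (le_antisymm h2.1 h1.1) (le_antisymm h1.2.2.2 h2.2.2.2)
  · intro x y hx hy h1 h2
    exact gamma_closure v hx hy h1 h2

/-- The set `Γ_v` of quantum-edge labels `(i,j)` with `i ≤ k < j`
is closed under the operation `(p,q),(r,s) ↦ (p,s),(r,q)` for `p < r ≤ k < q < s`,
and (when nonempty) has a unique maximum and a unique minimum with respect to `⪯`. -/
theorem stmt8 {n k : ℕ} (hk1 : 1 ≤ k) (hk2 : k ≤ n - 1) (v : Equiv.Perm (Fin n)) :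
    ((GammaSet k v).Nonempty →
      (∃! m : Fin n × Fin n, isMaxOf k (GammaSet k v) m) ∧
      (∃! m : Fin n × Fin n, isMinOf k (GammaSet k v) m)) ∧
    (∀ x y : Fin n × Fin n, x ∈ GammaSet k v → y ∈ GammaSet k v →
      x.1 < y.1 → x.2 < y.2 → (x.1, y.2) ∈ GammaSet k v ∧ (y.1, x.2) ∈ GammaSet k v) := by
  exact stmt8' hk1 hk2 v
end
end

section
/- Fix n, k with 1 ≤ k ≤ n-1 and w ∈ S_n with Γ_w nonempty, where Γ_w = {(i,j) : i ≤ k < j, w → w·(i,j) is a quantum edge of QB(S_n)}. Define recursively (p_1,q_1) := max_⪯ Γ_w and (p_{l+1},q_{l+1}) := max_⪯ {(a,b) ∈ Γ_w : p_l < a ≤ k < b < q_l}, terminating at step L when this set is empty. Then the sequence of transpositions (p_1,q_1), ..., (p_L,q_L), applied in this order starting from w, yields a directed path in QB(S_n) all of whose steps are quantum edges. -/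
open scoped Classical

noncomputable section

/-- `GreedyList k w S L`: `L` is the list obtained by the greedy recursion
`(p_1,q_1) = max_⪯ S`, `(p_{l+1},q_{l+1}) = max_⪯ {(a,b) ∈ Γ_w : p_l < a ≤ k < b < q_l}`,
terminating when the candidate set is empty. -/
def GreedyList {n : ℕ} (k : ℕ) (w : Equiv.Perm (Fin n)) :
    Set (Fin n × Fin n) → List (Fin n × Fin n) → Prop
  | S, [] => S = ∅
  | S, p :: L =>
      isMaxOf k S p ∧
      GreedyList k w {x ∈ GammaSet k w | p.1 < x.1 ∧ x.2 < p.2} L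

namespace Stmt11Aux

/-- Indicator of an inversion of `v` at the pair `x`. -/
def chi {n : ℕ} (v : Equiv.Perm (Fin n)) (x : Fin n × Fin n) : ℕ :=
  if x.1 < x.2 ∧ v x.2 < v x.1 then 1 else 0

lemma lenA_eq_sum {n : ℕ} (v : Equiv.Perm (Fin n)) :
    lenA v = ∑ x : Fin n × Fin n, chi v x := by
  rw [lenA, Finset.card_filter]
  rfl

set_option maxHeartbeats 1000000 in
lemma four_term {n : ℕ} (w : Equiv.Perm (Fin n)) {p a b q : Fin n}
    (hpa : p < a) (hab : a < b) (hbq : b < q) :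
    lenA (w * Equiv.swap p q * Equiv.swap a b) + lenA w
      = lenA (w * Equiv.swap p q) + lenA (w * Equiv.swap a b) := by
  classical
  have hpb : p < b := hpa.trans hab
  have haq : a < q := hab.trans hbq
  have hpq : p < q := hpa.trans haq
  have hpa' : p ≠ a := ne_of_lt hpa
  have hpb' : p ≠ b := ne_of_lt hpb
  have hpq' : p ≠ q := ne_of_lt hpq
  have hab' : a ≠ b := ne_of_lt hab
  have haq' : a ≠ q := ne_of_lt haq
  have hbq' : b ≠ q := ne_of_lt hbq
  -- swap values
  have ta : Equiv.swap a b a = b := Equiv.swap_apply_left a b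
  have tb : Equiv.swap a b b = a := Equiv.swap_apply_right a b
  have tp : Equiv.swap a b p = p := Equiv.swap_apply_of_ne_of_ne hpa' hpb'
  have tq : Equiv.swap a b q = q := Equiv.swap_apply_of_ne_of_ne haq'.symm hbq'.symm
  have sp : Equiv.swap p q p = q := Equiv.swap_apply_left p q
  have sq : Equiv.swap p q q = p := Equiv.swap_apply_right p q
  have sa : Equiv.swap p q a = a := Equiv.swap_apply_of_ne_of_ne hpa'.symm haq'
  have sb : Equiv.swap p q b = b := Equiv.swap_apply_of_ne_of_ne hpb'.symm hbq'
  set σ : Equiv.Perm (Fin n × Fin n) :=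
    (Equiv.swap (p, a) (p, b)).trans (Equiv.swap (a, q) (b, q)) with hσ
  have npa_aq : ((p, a) : Fin n × Fin n) ≠ (a, q) := by
    simp only [ne_eq, Prod.mk.injEq, not_and]; intro h; exact absurd h hpa'
  have npa_bq : ((p, a) : Fin n × Fin n) ≠ (b, q) := by
    simp only [ne_eq, Prod.mk.injEq, not_and]; intro h; exact absurd h hpb'
  have npb_aq : ((p, b) : Fin n × Fin n) ≠ (a, q) := by
    simp only [ne_eq, Prod.mk.injEq, not_and]; intro h; exact absurd h hpa'
  have npb_bq : ((p, b) : Fin n × Fin n) ≠ (b, q) := by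
    simp only [ne_eq, Prod.mk.injEq, not_and]; intro h; exact absurd h hpb'
  have naq_pa : ((a, q) : Fin n × Fin n) ≠ (p, a) := by
    simp only [ne_eq, Prod.mk.injEq, not_and]; intro h; exact absurd h hpa'.symm
  have naq_pb : ((a, q) : Fin n × Fin n) ≠ (p, b) := by
    simp only [ne_eq, Prod.mk.injEq, not_and]; intro h; exact absurd h hpa'.symm
  have nbq_pa : ((b, q) : Fin n × Fin n) ≠ (p, a) := by
    simp only [ne_eq, Prod.mk.injEq, not_and]; intro h; exact absurd h hpb'.symm
  have nbq_pb : ((b, q) : Fin n × Fin n) ≠ (p, b) := by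
    simp only [ne_eq, Prod.mk.injEq, not_and]; intro h; exact absurd h hpb'.symm
  have key : ∀ x : Fin n × Fin n,
      chi (w * Equiv.swap p q * Equiv.swap a b) x + chi w x
        = chi (w * Equiv.swap p q) (σ x) + chi (w * Equiv.swap a b) (σ x) := by
    intro x
    by_cases h1 : x = (p, a)
    · subst h1
      have e1 : σ (p, a) = (p, b) := by
        rw [hσ, Equiv.trans_apply, Equiv.swap_apply_left,
          Equiv.swap_apply_of_ne_of_ne npb_aq npb_bq]
      rw [e1]
      simp only [chi, Equiv.Perm.mul_apply, ta, tb, tp, tq, sa, sb, sp, sq]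
      simp [hpa, hpb]
    by_cases h2 : x = (p, b)
    · subst h2
      have e2 : σ (p, b) = (p, a) := by
        rw [hσ, Equiv.trans_apply, Equiv.swap_apply_right,
          Equiv.swap_apply_of_ne_of_ne npa_aq npa_bq]
      rw [e2]
      simp only [chi, Equiv.Perm.mul_apply, ta, tb, tp, tq, sa, sb, sp, sq]
      simp [hpa, hpb]
    by_cases h3 : x = (a, q)
    · subst h3
      have e3 : σ (a, q) = (b, q) := by
        rw [hσ, Equiv.trans_apply, Equiv.swap_apply_of_ne_of_ne naq_pa naq_pb,
          Equiv.swap_apply_left]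
      rw [e3]
      simp only [chi, Equiv.Perm.mul_apply, ta, tb, tp, tq, sa, sb, sp, sq]
      simp [haq, hbq]
    by_cases h4 : x = (b, q)
    · subst h4
      have e4 : σ (b, q) = (a, q) := by
        rw [hσ, Equiv.trans_apply, Equiv.swap_apply_of_ne_of_ne nbq_pa nbq_pb,
          Equiv.swap_apply_right]
      rw [e4]
      simp only [chi, Equiv.Perm.mul_apply, ta, tb, tp, tq, sa, sb, sp, sq]
      simp [haq, hbq]
    -- generic case: σ fixes x
    have e0 : σ x = x := by
      rw [hσ, Equiv.trans_apply, Equiv.swap_apply_of_ne_of_ne h1 h2,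
        Equiv.swap_apply_of_ne_of_ne h3 h4]
    rw [e0]
    obtain ⟨i, j⟩ := x
    have h1' : ¬(i = p ∧ j = a) := by rintro ⟨rfl, rfl⟩; exact h1 rfl
    have h2' : ¬(i = p ∧ j = b) := by rintro ⟨rfl, rfl⟩; exact h2 rfl
    have h3' : ¬(i = a ∧ j = q) := by rintro ⟨rfl, rfl⟩; exact h3 rfl
    have h4' : ¬(i = b ∧ j = q) := by rintro ⟨rfl, rfl⟩; exact h4 rfl
    by_cases hij : i < j
    · by_cases hmem : i = a ∨ i = b ∨ j = a ∨ j = b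
      · -- then i, j avoid p and q
        have hip : i ≠ p := by
          rintro rfl
          rcases hmem with h | h | h | h
          · exact hpa' h
          · exact hpb' h
          · exact h1' ⟨rfl, h⟩
          · exact h2' ⟨rfl, h⟩
        have hiq : i ≠ q := by
          rintro rfl
          rcases hmem with h | h | h | h
          · exact (ne_of_gt haq) h
          · exact (ne_of_gt hbq) h
          · exact absurd (h ▸ hij) (lt_asymm haq)
          · exact absurd (h ▸ hij) (lt_asymm hbq)
        have hjp : j ≠ p := by
          rintro rfl
          rcases hmem with h | h | h | h
          · exact absurd (h ▸ hij) (lt_asymm hpa)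
          · exact absurd (h ▸ hij) (lt_asymm hpb)
          · exact hpa' h
          · exact hpb' h
        have hjq : j ≠ q := by
          rintro rfl
          rcases hmem with h | h | h | h
          · exact h3' ⟨h, rfl⟩
          · exact h4' ⟨h, rfl⟩
          · exact (ne_of_gt haq) h
          · exact (ne_of_gt hbq) h
        have si : Equiv.swap p q i = i := Equiv.swap_apply_of_ne_of_ne hip hiq
        have sj : Equiv.swap p q j = j := Equiv.swap_apply_of_ne_of_ne hjp hjq
        have key2 : ∀ y : Fin n, y ≠ p → y ≠ q →
            Equiv.swap p q (Equiv.swap a b y) = Equiv.swap a b y := by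
          intro y hy1 hy2
          rcases eq_or_ne y a with rfl | hya
          · rw [ta]; exact sb
          rcases eq_or_ne y b with rfl | hyb
          · rw [tb]; exact sa
          rw [Equiv.swap_apply_of_ne_of_ne hya hyb]
          exact Equiv.swap_apply_of_ne_of_ne hy1 hy2
        simp only [chi, Equiv.Perm.mul_apply, key2 i hip hiq, key2 j hjp hjq, si, sj]
        exact Nat.add_comm _ _
      · push_neg at hmem
        obtain ⟨hia, hib, hja, hjb⟩ := hmem
        have ti : Equiv.swap a b i = i := Equiv.swap_apply_of_ne_of_ne hia hib
        have tj : Equiv.swap a b j = j := Equiv.swap_apply_of_ne_of_ne hja hjb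
        simp only [chi, Equiv.Perm.mul_apply, ti, tj]
        rfl
    · simp [chi, hij]
  have hsum : ∀ (u v' : Equiv.Perm (Fin n)),
      lenA u + lenA v' = ∑ x : Fin n × Fin n, (chi u x + chi v' x) := by
    intro u v'
    rw [lenA_eq_sum, lenA_eq_sum, Finset.sum_add_distrib]
  rw [hsum, hsum]
  have step1 : ∑ x : Fin n × Fin n,
      (chi (w * Equiv.swap p q * Equiv.swap a b) x + chi w x)
      = ∑ x : Fin n × Fin n,
        (chi (w * Equiv.swap p q) (σ x) + chi (w * Equiv.swap a b) (σ x)) :=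
    Finset.sum_congr rfl fun x _ => key x
  have step2 : ∑ x : Fin n × Fin n,
      (chi (w * Equiv.swap p q) (σ x) + chi (w * Equiv.swap a b) (σ x))
      = ∑ x : Fin n × Fin n,
        (chi (w * Equiv.swap p q) x + chi (w * Equiv.swap a b) x) :=
    Equiv.sum_comp σ (fun x => chi (w * Equiv.swap p q) x + chi (w * Equiv.swap a b) x)
  rw [step1, step2]

lemma qEdge_pres {n : ℕ} (v : Equiv.Perm (Fin n)) {p a b q : Fin n}
    (hpa : p < a) (hab : a < b) (hbq : b < q) (h : qEdgeA v a b) :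
    qEdgeA (v * Equiv.swap p q) a b := by
  obtain ⟨h1, h2⟩ := h
  refine ⟨h1, ?_⟩
  have ft := four_term v hpa hab hbq
  omega

lemma greedy_aux {n k : ℕ} (w : Equiv.Perm (Fin n)) :
    ∀ (L : List (Fin n × Fin n)) (v : Equiv.Perm (Fin n)) (S : Set (Fin n × Fin n)),
      GreedyList k w S L →
      (∀ x ∈ S, midA k x.1 x.2 ∧ qEdgeA v x.1 x.2) →
      (∀ x ∈ GammaSet k w, ∀ r ∈ S, r.1 < x.1 → x.2 < r.2 → x ∈ S) →
      QPathA k v L := by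
  intro L
  induction L with
  | nil => intro v S _ _ _; trivial
  | cons p L ih =>
    intro v S hG H Hdown
    obtain ⟨hmax, hG'⟩ := hG
    have hpS := hmax.1
    obtain ⟨hmid, hq⟩ := H p hpS
    refine ⟨hmid, hq, ?_⟩
    refine ih (v * Equiv.swap p.1 p.2) _ hG' ?_ ?_
    · rintro x ⟨hxΓ, hx1, hx2⟩
      have hxS : x ∈ S := Hdown x hxΓ p hpS hx1 hx2
      obtain ⟨hxmid, hxq⟩ := H x hxS
      exact ⟨hxmid, qEdge_pres v hx1
        (Fin.lt_def.2 (lt_of_lt_of_le hxmid.1 hxmid.2)) hx2 hxq⟩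
    · rintro x hxΓ r ⟨hrΓ, hr1, hr2⟩ h1' h2'
      exact ⟨hxΓ, hr1.trans h1', h2'.trans hr2⟩

end Stmt11Aux

/-- The greedy sequence `(p_1,q_1), …, (p_L,q_L)` extracted from
`Γ_w` yields, when applied in order starting at `w`, a directed path in `QB(S_n)`
all of whose steps are quantum edges. -/
theorem stmt11 {n k : ℕ} (hk1 : 1 ≤ k) (hk2 : k ≤ n - 1)
    (w : Equiv.Perm (Fin n)) (hne : (GammaSet k w).Nonempty)
    (L : List (Fin n × Fin n)) (hL : GreedyList k w (GammaSet k w) L) :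
    QPathA k w L :=
  Stmt11Aux.greedy_aux w L w (GammaSet k w) hL (fun _ hx => hx)
    (fun _ hx _ _ _ _ => hx)
end
end

section
/- Fix n, k with 1 ≤ k ≤ n-1. For any w ∈ S_n and any path in QB(S_n) starting at w whose quantum-edge labels are (p_1',q_1'), ..., (p_m',q_m') (all of the form i ≤ k < j, nested with (p_m',q_m') innermost), the total degree sum Σ_t (q_t' - p_t') is at most k(n-k). The bound k'(n-k') for k' = min(k, n-k) is attained by the path starting at w(i) = n+1-i (the longest element) with labels (1,n), (2,n-1), ..., (k', n+1-k'), all of which are quantum edges. -/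
open scoped Classical

noncomputable section

/-! ### Auxiliary material -/

section Aux

/-- All labels of a quantum path lie in the "middle" region. -/
lemma qpath_midA {n k : ℕ} :
    ∀ (L : List (Fin n × Fin n)) (w : Equiv.Perm (Fin n)),
      QPathA k w L → ∀ p ∈ L, midA k p.1 p.2 := by
  intro L
  induction L with
  | nil => intro w _ p hp; exact absurd hp List.not_mem_nil
  | cons q T ih =>
    intro w hQ p hp
    rcases List.mem_cons.mp hp with rfl | hp'
    · exact hQ.1
    · exact ih _ hQ.2.2 p hp'

/-- Key combinatorial bound for nested sequences of pairs. -/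
lemma nestedAux : ∀ (L : List (ℕ × ℕ)) (a b k : ℕ), a ≤ k → k ≤ b + 1 →
    (∀ p ∈ L, a ≤ p.1 ∧ p.1 < k ∧ k ≤ p.2 ∧ p.2 ≤ b) →
    List.Pairwise (fun p q => p.1 < q.1 ∧ q.2 < p.2) L →
    (L.map (fun p => p.2 - p.1)).sum + L.length * L.length ≤ L.length * (b + 1 - a)
      ∧ L.length + a ≤ k ∧ L.length + k ≤ b + 1 := by
  intro L
  induction L with
  | nil => intro a b k hak hkb _ _; simpa using ⟨hak, hkb⟩
  | cons p T ih =>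
    intro a b k hak hkb hmem hpw
    obtain ⟨hap, hpk, hkq, hqb⟩ := hmem p List.mem_cons_self
    rw [List.pairwise_cons] at hpw
    have hmem' : ∀ x ∈ T, p.1 + 1 ≤ x.1 ∧ x.1 < k ∧ k ≤ x.2 ∧ x.2 ≤ p.2 - 1 := by
      intro x hx
      obtain ⟨h1, h2⟩ := hpw.1 x hx
      obtain ⟨_, h3, h4, _⟩ := hmem x (List.mem_cons_of_mem p hx)
      exact ⟨by omega, h3, h4, by omega⟩
    obtain ⟨ihsum, ihm1, ihm2⟩ := ih (p.1 + 1) (p.2 - 1) k (by omega) (by omega) hmem' hpw.2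
    refine ⟨?_, by simp; omega, by simp; omega⟩
    simp only [List.map_cons, List.sum_cons, List.length_cons]
    have hba : p.2 - 1 + 1 - (p.1 + 1) = p.2 - p.1 - 1 := by omega
    rw [hba] at ihsum
    set m := T.length with hm
    set S := (T.map (fun p => p.2 - p.1)).sum with hS
    obtain ⟨c, hc⟩ : ∃ c, p.2 - p.1 = c + 1 := ⟨p.2 - p.1 - 1, by omega⟩
    have hcD : c + 2 ≤ b + 1 - a := by omega
    rw [hc]
    rw [show p.2 - p.1 - 1 = c by omega] at ihsum
    have key : (m + 1) * (c + 2) ≤ (m + 1) * (b + 1 - a) := Nat.mul_le_mul_left _ hcD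
    nlinarith [ihsum, key]

/-- The permutation reversing the middle block `[t, n-1-t]`. -/
def midRevF (n t : ℕ) : Fin n → Fin n := fun i =>
  if t ≤ (i : ℕ) ∧ (i : ℕ) + t + 1 ≤ n then ⟨n - 1 - i, by omega⟩ else i

lemma midRevF_invol (n t : ℕ) : Function.Involutive (midRevF n t) := by
  intro i
  have hi := i.isLt
  unfold midRevF
  split_ifs with h1 h2 <;> try rfl
  · exact Fin.ext (by simp; omega)
  · exfalso; simp at h2 ⊢; omega

def midRev (n t : ℕ) : Equiv.Perm (Fin n) := (midRevF_invol n t).toPerm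

lemma midRev_apply (n t : ℕ) (i : Fin n) :
    midRev n t i = if t ≤ (i : ℕ) ∧ (i : ℕ) + t + 1 ≤ n
      then (⟨n - 1 - i, by have := i.isLt; omega⟩ : Fin n) else i := rfl

lemma midRev_zero (n : ℕ) : midRev n 0 = (Fin.revPerm : Equiv.Perm (Fin n)) := by
  ext i
  have hi := i.isLt
  simp [midRev_apply, Nat.succ_le_of_lt hi, Fin.val_rev]
  omega

lemma pairsCount {α : Type*} [LinearOrder α] [DecidableEq α] (s : Finset α) :
    ((s ×ˢ s).filter (fun p => p.1 < p.2)).card = s.card.choose 2 := by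
  classical
  have hswap : ((s ×ˢ s).filter (fun p => p.1 < p.2)).card
      = ((s ×ˢ s).filter (fun p => p.2 < p.1)).card := by
    apply Finset.card_nbij' (i := Prod.swap) (j := Prod.swap) <;>
      intro x hx <;> simp only [Set.mem_setOf_eq, Finset.coe_filter, Finset.mem_product, Prod.fst_swap, Prod.snd_swap, Prod.swap_swap] at hx ⊢ <;> tauto
  have hunion : (s ×ˢ s).filter (fun p => p.1 < p.2) ∪ (s ×ˢ s).filter (fun p => p.2 < p.1)
      = s.offDiag := by
    rw [← Finset.filter_or, show s.offDiag = (s ×ˢ s).filter (fun a => a.1 ≠ a.2) from by ext a; simp [Finset.mem_offDiag, and_assoc]]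
    apply Finset.filter_congr
    intro p _
    constructor
    · rintro (h | h)
      · exact h.ne
      · exact h.ne'
    · intro h; rcases lt_or_gt_of_ne h with h | h
      · exact Or.inl h
      · exact Or.inr h
  have hdisj : Disjoint ((s ×ˢ s).filter (fun p => p.1 < p.2))
      ((s ×ˢ s).filter (fun p => p.2 < p.1)) := by
    rw [Finset.disjoint_left]
    intro p hp hq
    simp only [Finset.mem_filter] at hp hq
    exact absurd hq.2 (lt_asymm hp.2)
  have hcard := Finset.card_union_of_disjoint hdisj
  rw [hunion, Finset.offDiag_card, ← hswap] at hcard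
  have h2 : s.card.choose 2 = s.card * (s.card - 1) / 2 := Nat.choose_two_right s.card
  have h3 : s.card * (s.card - 1) = s.card * s.card - s.card := by
    cases s.card with
    | zero => simp
    | succ m => simp [Nat.mul_sub, Nat.mul_succ, Nat.succ_mul]
  omega

lemma lenA_midRev (n t : ℕ) (ht : 2 * t ≤ n) (hn : 1 ≤ n) :
    lenA (midRev n t) = (n - 2 * t).choose 2 := by
  have hset : (Finset.univ.filter
      (fun p : Fin n × Fin n => p.1 < p.2 ∧ (midRev n t) p.2 < (midRev n t) p.1))
      = ((Finset.Icc (⟨t, by omega⟩ : Fin n) ⟨n - 1 - t, by omega⟩ ×ˢ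
          Finset.Icc (⟨t, by omega⟩ : Fin n) ⟨n - 1 - t, by omega⟩).filter
         (fun p => p.1 < p.2)) := by
    ext p
    obtain ⟨i, j⟩ := p
    have hi := i.isLt
    have hj := j.isLt
    simp only [Finset.mem_filter, Finset.mem_univ, true_and, Finset.mem_product,
      Finset.mem_Icc, midRev_apply, Fin.lt_def, Fin.le_def]
    split_ifs with h1 h2 h3 <;>
      (try simp only [Fin.mk_lt_mk, Fin.lt_def, Fin.le_def]) <;>
      (constructor <;> intro h <;> omega)
  unfold lenA
  rw [hset, pairsCount, Fin.card_Icc]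
  congr 1
  simp
  omega

lemma midRev_step (n t : ℕ) (ht : 2 * t + 2 ≤ n) :
    midRev n t * Equiv.swap (⟨t, by omega⟩ : Fin n) ⟨n - 1 - t, by omega⟩
      = midRev n (t + 1) := by
  ext i
  have hi := i.isLt
  rw [Equiv.Perm.mul_apply]
  rcases eq_or_ne i ⟨t, by omega⟩ with h0 | h1
  · rw [h0, Equiv.swap_apply_left]
    simp only [midRev_apply]
    split_ifs <;> simp <;> omega
  · rcases eq_or_ne i ⟨n - 1 - t, by omega⟩ with h2x | h2
    · rw [h2x, Equiv.swap_apply_right]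
      simp only [midRev_apply]
      split_ifs <;> simp <;> omega
    · rw [Equiv.swap_apply_of_ne_of_ne h1 h2]
      have h1' : (i : ℕ) ≠ t := fun h => h1 (Fin.ext h)
      have h2' : (i : ℕ) ≠ n - 1 - t := fun h => h2 (Fin.ext h)
      simp only [midRev_apply]
      split_ifs with ha hb <;> first | rfl | (exfalso; omega)

lemma qEdge_midRev (n k t : ℕ) (hk1 : 1 ≤ k) (hk2 : k ≤ n - 1)
    (ht : t < min k (n - k)) :
    qEdgeA (midRev n t) (⟨t, by omega⟩ : Fin n) ⟨n - 1 - t, by omega⟩ := by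
  have hn : 2 ≤ n := by omega
  have htk : t < k := lt_of_lt_of_le ht (min_le_left _ _)
  have htk' : t < n - k := lt_of_lt_of_le ht (min_le_right _ _)
  have h2t : 2 * t + 2 ≤ n := by omega
  constructor
  · exact Fin.mk_lt_mk.mpr (by omega)
  · have cv : ((⟨n - 1 - t, by omega⟩ : Fin n) : ℕ) - ((⟨t, by omega⟩ : Fin n) : ℕ)
        = (n - 1 - t) - t := rfl
    rw [cv, midRev_step n t h2t, lenA_midRev n (t+1) (by omega) (by omega),
      lenA_midRev n t (by omega) (by omega)]
    obtain ⟨s, hs⟩ : ∃ s, n - 2 * t = s + 2 := ⟨n - 2 * t - 2, by omega⟩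
    rw [show n - 2 * (t + 1) = s by omega, hs, show n - 1 - t - t = s + 1 by omega,
      Nat.choose_two_right, Nat.choose_two_right]
    have key : (s + 2) * (s + 2 - 1) = s * (s - 1) + 4 * s + 2 := by
      cases s with
      | zero => rfl
      | succ u => simp [Nat.succ_sub_one]; ring
    have hev : 2 ∣ s * (s - 1) := by
      cases s with
      | zero => simp
      | succ u => simpa [Nat.succ_sub_one, mul_comm] using (Nat.even_mul_succ_self u).two_dvd
    rw [key]
    omega

lemma qpath_midRev (n k : ℕ) (hk1 : 1 ≤ k) (hk2 : k ≤ n - 1) :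
    ∀ (c t : ℕ), t + c ≤ min k (n - k) →
      QPathA k (midRev n t)
        ((List.range' t c).map
          (fun t => ((⟨t % n, Nat.mod_lt _ (Nat.pos_of_ne_zero (by omega))⟩ : Fin n),
                     (⟨(n - 1 - t) % n, Nat.mod_lt _ (Nat.pos_of_ne_zero (by omega))⟩ : Fin n)))) := by
  have hn : 2 ≤ n := by omega
  intro c
  induction c with
  | zero => intro t _; rw [List.range'_zero]; exact trivial
  | succ c ih =>
    intro t htc
    have ht : t < min k (n - k) := by omega
    have htk : t < k := lt_of_lt_of_le ht (min_le_left _ _)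
    have htk' : t < n - k := lt_of_lt_of_le ht (min_le_right _ _)
    have h2t : 2 * t + 2 ≤ n := by omega
    rw [List.range'_succ, List.map_cons]
    have e1 : (⟨t % n, Nat.mod_lt _ (Nat.pos_of_ne_zero (by omega))⟩ : Fin n) = ⟨t, by omega⟩ :=
      Fin.ext (Nat.mod_eq_of_lt (by omega))
    have e2 : (⟨(n - 1 - t) % n, Nat.mod_lt _ (Nat.pos_of_ne_zero (by omega))⟩ : Fin n) = ⟨n - 1 - t, by omega⟩ :=
      Fin.ext (Nat.mod_eq_of_lt (by omega))
    refine ⟨?_, ?_, ?_⟩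
    · rw [e1, e2]
      exact ⟨show (t : ℕ) < k by omega, show k ≤ n - 1 - t by omega⟩
    · rw [e1, e2]; exact qEdge_midRev n k t hk1 hk2 ht
    · rw [e1, e2, midRev_step n t h2t]
      exact ih (t + 1) (by omega)

lemma sum_formula (n : ℕ) (hn : 1 ≤ n) :
    ∀ m, 2 * m ≤ n →
      ((List.range m).map (fun t => (n - 1 - t) % n - t % n)).sum = m * (n - m) := by
  intro m
  induction m with
  | zero => simp
  | succ m ih =>
    intro hm
    rw [List.range_succ, List.map_append, List.sum_append, ih (by omega)]
    simp only [List.map_cons, List.map_nil, List.sum_cons, List.sum_nil]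
    rw [Nat.mod_eq_of_lt (show m < n by omega), Nat.mod_eq_of_lt (show n - 1 - m < n by omega)]
    obtain ⟨s, hs⟩ : ∃ s, n = m + (s + 1) + 1 := ⟨n - m - 2, by omega⟩
    subst hs
    rw [show m + (s + 1) + 1 - m = s + 2 by omega,
        show m + (s + 1) + 1 - 1 - m - m = s + 1 - m by omega,
        show m + (s + 1) + 1 - (m + 1) = s + 1 by omega,
        Nat.mul_succ, Nat.succ_mul]
    have hms : m ≤ s := by omega
    zify [hms, show m ≤ 1 + s by omega, show m ≤ s + 1 by omega]
    ring

end Aux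

/-- For any path in `QB(S_n)` starting at `w` all of whose steps
are quantum edges with nested labels `(i,j)`, `i ≤ k < j`, the total degree
`Σ (j - i)` is at most `k(n-k)`; the bound `k'(n-k')` for `k' = min(k, n-k)` is
attained by the path starting at the longest element with labels
`(1,n), (2,n-1), …, (k', n+1-k')` (1-indexed), all of which are quantum edges. -/
theorem stmt12 {n k : ℕ} (hk1 : 1 ≤ k) (hk2 : k ≤ n - 1) :
    (∀ (w : Equiv.Perm (Fin n)) (L : List (Fin n × Fin n)),
      QPathA k w L →
      List.Pairwise (fun p q : Fin n × Fin n => p.1 < q.1 ∧ q.2 < p.2) L →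
      (L.map (fun p : Fin n × Fin n => (p.2 : ℕ) - (p.1 : ℕ))).sum ≤ k * (n - k)) ∧
    (∀ L : List (Fin n × Fin n),
      L = (List.range (min k (n - k))).map
        (fun t => ((⟨t % n, Nat.mod_lt _ (by omega)⟩ : Fin n),
                   (⟨(n - 1 - t) % n, Nat.mod_lt _ (by omega)⟩ : Fin n))) →
      QPathA k (Fin.revPerm : Equiv.Perm (Fin n)) L ∧
      (L.map (fun p : Fin n × Fin n => (p.2 : ℕ) - (p.1 : ℕ))).sum
        = min k (n - k) * (n - min k (n - k))) := by
  have hn : 2 ≤ n := by omega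
  constructor
  · -- Part 1
    intro w L hQ hpw
    have hmid := qpath_midA L w hQ
    set L' : List (ℕ × ℕ) := L.map (fun p => ((p.1 : ℕ), (p.2 : ℕ))) with hL'
    have hmem : ∀ p ∈ L', 0 ≤ p.1 ∧ p.1 < k ∧ k ≤ p.2 ∧ p.2 ≤ n - 1 := by
      intro p hp
      rw [hL', List.mem_map] at hp
      obtain ⟨q, hq, rfl⟩ := hp
      obtain ⟨h1, h2⟩ := hmid q hq
      have := q.2.isLt
      exact ⟨Nat.zero_le _, h1, h2, by omega⟩
    have hpw' : List.Pairwise (fun p q : ℕ × ℕ => p.1 < q.1 ∧ q.2 < p.2) L' := by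
      rw [hL', List.pairwise_map]
      exact hpw.imp (fun h => ⟨h.1, h.2⟩)
    obtain ⟨hsum, hm1, hm2⟩ := nestedAux L' 0 (n - 1) k (by omega) (by omega) hmem hpw'
    rw [show n - 1 + 1 - 0 = n by omega] at hsum
    rw [show n - 1 + 1 = n by omega] at hm2
    have hlen : L'.length = L.length := by rw [hL', List.length_map]
    have hsums : (L'.map (fun p => p.2 - p.1)).sum
        = (L.map (fun p : Fin n × Fin n => (p.2 : ℕ) - (p.1 : ℕ))).sum := by
      rw [hL', List.map_map]
      rfl
    rw [hlen, hsums] at hsum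
    rw [hlen] at hm1 hm2
    set S := (L.map (fun p : Fin n × Fin n => (p.2 : ℕ) - (p.1 : ℕ))).sum
    set m := L.length
    obtain ⟨x, hx⟩ : ∃ x, k = m + x := ⟨k - m, by omega⟩
    obtain ⟨y, hy⟩ : ∃ y, n - k = m + y := ⟨n - k - m, by omega⟩
    have hnk : n = k + (n - k) := by omega
    rw [show k * (n - k) = (m + x) * (m + y) by rw [← hx, ← hy]]
    have hn' : m * n = m * (m + x) + m * (m + y) := by
      rw [← hx, ← hy, ← Nat.mul_add, ← hnk]
    nlinarith [hsum, hn']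
  · -- Part 2
    intro L hL
    subst hL
    have h2m : 2 * min k (n - k) ≤ n := by omega
    constructor
    · rw [← midRev_zero n, List.range_eq_range']
      exact qpath_midRev n k hk1 hk2 (min k (n - k)) 0 (by omega)
    · rw [List.map_map]
      have : ((fun p : Fin n × Fin n => (p.2 : ℕ) - (p.1 : ℕ)) ∘
          (fun t => ((⟨t % n, Nat.mod_lt _ (by omega)⟩ : Fin n),
                     (⟨(n - 1 - t) % n, Nat.mod_lt _ (by omega)⟩ : Fin n))))
          = (fun t => (n - 1 - t) % n - t % n) := rfl
      rw [this]
      exact sum_formula n (by omega) (min k (n - k)) h2m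
end
end

section
/- Fix n, k and v ∈ S_n, and let σW_J be a coset of the parabolic subgroup W_J of S_n with J = I \ {k} (so W_J = S_k × S_{n-k} acting on positions). Then there exists a unique w ∈ σW_J satisfying: for every pair k+1 ≤ j < i ≤ n, it is false that v(i) = w(j) and false that w(j) lies strictly between v(i) and w(i) in the circular order starting at v(i) (Condition on the last n-k positions), and the analogous condition with the reverse circular order on the first k positions. -/
open scoped Classical

noncomputable section

/-- Greedy assignment lemma: given keys on positions, there is a unique (on `S`)
assignment of values in `T` to positions in `S` such that the value at each
position has strictly smaller key (keyed at that position) than values at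
earlier positions. -/
lemma greedyA {n : ℕ} (key : Fin n → Fin n → ℕ)
    (hinj : ∀ i, Function.Injective (key i)) (m : ℕ) :
    ∀ S T : Finset (Fin n), S.card = m → S.card = T.card →
    ∃ g : Fin n → Fin n,
      ((∀ i ∈ S, g i ∈ T) ∧ Set.InjOn g ↑S ∧
       (∀ i ∈ S, ∀ j ∈ S, j < i → key i (g i) < key i (g j))) ∧
      (∀ g' : Fin n → Fin n,
        ((∀ i ∈ S, g' i ∈ T) ∧ Set.InjOn g' ↑S ∧
         (∀ i ∈ S, ∀ j ∈ S, j < i → key i (g' i) < key i (g' j))) →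
        ∀ x ∈ S, g' x = g x) := by
  induction m with
  | zero =>
    intro S T hS hST
    have hSe : S = ∅ := Finset.card_eq_zero.mp hS
    subst hSe
    exact ⟨id, ⟨by simp, by simp, by simp⟩, by simp⟩
  | succ m ih =>
    intro S T hS hST
    have hne : S.Nonempty := Finset.card_pos.mp (by omega)
    set i0 := S.max' hne with hi0
    have hi0S : i0 ∈ S := S.max'_mem hne
    have hlt : ∀ j ∈ S, j ≠ i0 → j < i0 := fun j hj hne' =>
      lt_of_le_of_ne (S.le_max' j hj) hne'
    have hTne : T.Nonempty := Finset.card_pos.mp (by omega)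
    obtain ⟨t0, ht0T, ht0min⟩ := T.exists_min_image (key i0) hTne
    have hc1 : (S.erase i0).card = m := by
      rw [Finset.card_erase_of_mem hi0S]; omega
    have hc2 : (S.erase i0).card = (T.erase t0).card := by
      rw [Finset.card_erase_of_mem hi0S, Finset.card_erase_of_mem ht0T]; omega
    obtain ⟨g, ⟨hmap, hginj, hkey⟩, huniq⟩ := ih (S.erase i0) (T.erase t0) hc1 hc2
    set G : Fin n → Fin n := Function.update g i0 t0 with hG
    have hGi0 : G i0 = t0 := Function.update_self _ _ _
    have hGne : ∀ x, x ≠ i0 → G x = g x := fun x hx => Function.update_of_ne hx _ _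
    refine ⟨G, ⟨?_, ?_, ?_⟩, ?_⟩
    · intro i hi
      by_cases h : i = i0
      · subst h; rw [hGi0]; exact ht0T
      · rw [hGne i h]
        exact Finset.mem_of_mem_erase (hmap i (Finset.mem_erase.mpr ⟨h, hi⟩))
    · intro x hx y hy hxy
      by_cases hxe : x = i0 <;> by_cases hye : y = i0
      · subst hxe hye; rfl
      · exfalso; subst hxe
        rw [hGi0, hGne y hye] at hxy
        exact (Finset.mem_erase.mp (hmap y (Finset.mem_erase.mpr ⟨hye, hy⟩))).1 hxy.symm
      · exfalso; subst hye
        rw [hGi0, hGne x hxe] at hxy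
        exact (Finset.mem_erase.mp (hmap x (Finset.mem_erase.mpr ⟨hxe, hx⟩))).1 hxy
      · rw [hGne x hxe, hGne y hye] at hxy
        exact hginj (by simp [hxe, hx]) (by simp [hye, hy]) hxy
    · intro i hi j hj hji
      by_cases h : i = i0
      · subst h
        have hjne : j ≠ i0 := ne_of_lt hji
        rw [hGi0, hGne j hjne]
        have hgj : g j ∈ T.erase t0 := hmap j (Finset.mem_erase.mpr ⟨hjne, hj⟩)
        have h1 : key i0 t0 ≤ key i0 (g j) :=
          ht0min _ (Finset.mem_of_mem_erase hgj)
        have h2 : key i0 t0 ≠ key i0 (g j) := fun he =>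
          (Finset.mem_erase.mp hgj).1 ((hinj i0 he).symm)
        omega
      · have hjne : j ≠ i0 := ne_of_lt (lt_of_lt_of_le hji (S.le_max' i hi))
        rw [hGne i h, hGne j hjne]
        exact hkey i (Finset.mem_erase.mpr ⟨h, hi⟩) j (Finset.mem_erase.mpr ⟨hjne, hj⟩) hji
    · rintro g' ⟨hmap', hinj', hkey'⟩ x hx
      -- g' is surjective onto T
      have himg : S.image g' = T := by
        apply Finset.eq_of_subset_of_card_le
        · intro t ht
          obtain ⟨a, ha, rfl⟩ := Finset.mem_image.mp ht
          exact hmap' a ha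
        · rw [Finset.card_image_of_injOn hinj']; omega
      have hsurj : ∀ t ∈ T, ∃ a ∈ S, g' a = t := fun t ht =>
        Finset.mem_image.mp (himg ▸ ht)
      -- g' i0 = t0
      have hgi0 : g' i0 = t0 := by
        by_contra hne'
        obtain ⟨a, haS, hat⟩ := hsurj t0 ht0T
        have hane : a ≠ i0 := fun h => hne' (h ▸ hat)
        have hA := hkey' i0 hi0S a haS (hlt a haS hane)
        have hB := ht0min (g' i0) (hmap' i0 hi0S)
        rw [hat] at hA
        omega
      by_cases hxe : x = i0
      · subst hxe; rw [hGi0, hgi0]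
      · rw [hGne x hxe]
        refine huniq g' ⟨?_, ?_, ?_⟩ x (Finset.mem_erase.mpr ⟨hxe, hx⟩)
        · intro i hi
          obtain ⟨hine, hiS⟩ := Finset.mem_erase.mp hi
          refine Finset.mem_erase.mpr ⟨?_, hmap' i hiS⟩
          intro h
          exact hine (hinj' hiS hi0S (h.trans hgi0.symm))
        · exact hinj'.mono (by intro a ha; exact Finset.mem_of_mem_erase ha)
        · intro i hi j hj hji
          exact hkey' i (Finset.mem_of_mem_erase hi) j (Finset.mem_of_mem_erase hj) hji

/-- For `v ∈ S_n` and a coset `σ W_J` of the parabolic subgroup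
`W_J = S_k × S_{n-k}` (permutations of positions preserving `{1,…,k}`), there is a
unique `w ∈ σ W_J` such that, for every pair of positions `k+1 ≤ j < i ≤ n`
(1-indexed), `v(i) ≠ w(j)` and `w(j)` does not lie strictly between `v(i)` and `w(i)`
in the circular order starting at `v(i)`, and analogously for positions
`1 ≤ j < i ≤ k` with the reverse circular order. -/
theorem stmt13 {n k : ℕ} (hk1 : 1 ≤ k) (hk2 : k ≤ n - 1)
    (v σ : Equiv.Perm (Fin n)) :
    ∃! w : Equiv.Perm (Fin n),
      (∃ u : Equiv.Perm (Fin n),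
        (∀ i : Fin n, (i : ℕ) < k ↔ (u i : ℕ) < k) ∧ w = σ * u) ∧
      (∀ i j : Fin n, k ≤ (j : ℕ) → j < i →
        v i ≠ w j ∧ ¬ circB (v i) (w j) (w i)) ∧
      (∀ i j : Fin n, j < i → (i : ℕ) < k →
        v i ≠ w j ∧ ¬ circBR (v i) (w j) (w i)) := by
  have hn : 2 ≤ n := by omega
  haveI : NeZero n := ⟨by omega⟩
  -- the two position blocks and their value sets
  set S1 : Finset (Fin n) := Finset.univ.filter (fun i : Fin n => (i : ℕ) < k) with hS1
  set S2 : Finset (Fin n) := Finset.univ.filter (fun i : Fin n => ¬ (i : ℕ) < k) with hS2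
  have hmemS1 : ∀ i : Fin n, i ∈ S1 ↔ (i : ℕ) < k := by
    intro i; simp [hS1]
  have hmemS2 : ∀ i : Fin n, i ∈ S2 ↔ ¬ (i : ℕ) < k := by
    intro i; simp [hS2]
  set T1 : Finset (Fin n) := S1.image σ with hT1
  set T2 : Finset (Fin n) := S2.image σ with hT2
  have hdisj : ∀ x : Fin n, x ∈ T1 → x ∈ T2 → False := by
    intro x h1 h2
    obtain ⟨a, ha, rfl⟩ := Finset.mem_image.mp h1
    obtain ⟨b, hb, hba⟩ := Finset.mem_image.mp h2
    have : b = a := σ.injective hba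
    subst this
    exact (hmemS2 b).mp hb ((hmemS1 b).mp ha)
  have hcard1 : S1.card = T1.card := (Finset.card_image_of_injOn (σ.injective.injOn)).symm
  have hcard2 : S2.card = T2.card := (Finset.card_image_of_injOn (σ.injective.injOn)).symm
  -- the keys
  set key1 : Fin n → Fin n → ℕ := fun i x => ((v i - x : Fin n) : ℕ) with hkey1
  set key2 : Fin n → Fin n → ℕ := fun i x => ((x - v i : Fin n) : ℕ) with hkey2
  have hinj1 : ∀ i, Function.Injective (key1 i) := fun i =>
    Fin.val_injective.comp sub_right_injective
  have hinj2 : ∀ i, Function.Injective (key2 i) := fun i =>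
    Fin.val_injective.comp sub_left_injective
  obtain ⟨g1, ⟨hmap1, hginj1, hgkey1⟩, huniq1⟩ := greedyA key1 hinj1 S1.card S1 T1 rfl hcard1
  obtain ⟨g2, ⟨hmap2, hginj2, hgkey2⟩, huniq2⟩ := greedyA key2 hinj2 S2.card S2 T2 rfl hcard2
  -- assemble the permutation
  set w0 : Fin n → Fin n := fun i => if (i : ℕ) < k then g1 i else g2 i with hw0
  have hw0T1 : ∀ i : Fin n, (i : ℕ) < k → w0 i ∈ T1 := by
    intro i hi; simp only [hw0, if_pos hi]; exact hmap1 i ((hmemS1 i).mpr hi)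
  have hw0T2 : ∀ i : Fin n, ¬ (i : ℕ) < k → w0 i ∈ T2 := by
    intro i hi; simp only [hw0, if_neg hi]; exact hmap2 i ((hmemS2 i).mpr hi)
  have hw0inj : Function.Injective w0 := by
    intro x y hxy
    by_cases hx : (x : ℕ) < k <;> by_cases hy : (y : ℕ) < k
    · simp only [hw0, if_pos hx, if_pos hy] at hxy
      exact hginj1 ((hmemS1 x).mpr hx) ((hmemS1 y).mpr hy) hxy
    · exact absurd (hdisj (w0 x) (hw0T1 x hx) (by rw [hxy]; exact hw0T2 y hy)) not_false
    · exact absurd (hdisj (w0 y) (hw0T1 y hy) (by rw [← hxy]; exact hw0T2 x hx)) not_false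
    · simp only [hw0, if_neg hx, if_neg hy] at hxy
      exact hginj2 ((hmemS2 x).mpr hx) ((hmemS2 y).mpr hy) hxy
  have hw0bij : Function.Bijective w0 := Finite.injective_iff_bijective.mp hw0inj
  set w : Equiv.Perm (Fin n) := Equiv.ofBijective w0 hw0bij with hwdef
  have hwapp : ∀ i, w i = w0 i := fun i => rfl
  -- membership characterization for any coset element
  have hmemT1 : ∀ (w' : Equiv.Perm (Fin n)),
      (∃ u : Equiv.Perm (Fin n), (∀ i : Fin n, (i : ℕ) < k ↔ (u i : ℕ) < k) ∧ w' = σ * u) →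
      (∀ i : Fin n, ((i : ℕ) < k → w' i ∈ T1) ∧ (¬ (i : ℕ) < k → w' i ∈ T2)) := by
    rintro w' ⟨u, hu, rfl⟩ i
    constructor
    · intro hi
      refine Finset.mem_image.mpr ⟨u i, (hmemS1 _).mpr ((hu i).mp hi), rfl⟩
    · intro hi
      refine Finset.mem_image.mpr ⟨u i, (hmemS2 _).mpr (fun h => hi ((hu i).mpr h)), rfl⟩
  -- key conditions on any coset element satisfying the circular conditions
  have hkeycond : ∀ (w' : Equiv.Perm (Fin n)),
      ((∀ i j : Fin n, k ≤ (j : ℕ) → j < i →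
          v i ≠ w' j ∧ ¬ circB (v i) (w' j) (w' i)) →
        ∀ i ∈ S2, ∀ j ∈ S2, j < i → key2 i (w' i) < key2 i (w' j)) ∧
      ((∀ i j : Fin n, j < i → (i : ℕ) < k →
          v i ≠ w' j ∧ ¬ circBR (v i) (w' j) (w' i)) →
        ∀ i ∈ S1, ∀ j ∈ S1, j < i → key1 i (w' i) < key1 i (w' j)) := by
    intro w'
    constructor
    · intro hcond i hi j hj hji
      obtain ⟨hne', hcb⟩ := hcond i j (le_of_not_gt ((hmemS2 j).mp hj)) hji
      have h1 : ¬ (w' j - v i < w' i - v i) := fun h => hcb ⟨fun he => hne' he.symm, h⟩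
      have h2 : w' i - v i ≠ w' j - v i :=
        fun h => (ne_of_lt hji) (w'.injective (sub_left_injective h)).symm
      simp only [Fin.lt_def] at h1
      have h2' : key2 i (w' i) ≠ key2 i (w' j) := fun h => h2 (Fin.val_injective h)
      simp only [hkey2] at h2' ⊢
      omega
    · intro hcond i hi j hj hji
      obtain ⟨hne', hcb⟩ := hcond i j hji ((hmemS1 i).mp hi)
      have h1 : ¬ (v i - w' j < v i - w' i) := fun h => hcb ⟨fun he => hne' he.symm, h⟩
      have h2 : v i - w' i ≠ v i - w' j :=
        fun h => (ne_of_lt hji) (w'.injective (sub_right_injective h)).symm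
      simp only [Fin.lt_def] at h1
      have h2' : key1 i (w' i) ≠ key1 i (w' j) := fun h => h2 (Fin.val_injective h)
      simp only [hkey1] at h2' ⊢
      omega
  refine ⟨w, ⟨?_, ?_, ?_⟩, ?_⟩
  · -- w is in the coset
    refine ⟨σ⁻¹ * w, ?_, by group⟩
    intro i
    have happ : (σ⁻¹ * w) i = σ⁻¹ (w i) := rfl
    rw [happ]
    constructor
    · intro hi
      have := hw0T1 i hi
      obtain ⟨a, ha, hax⟩ := Finset.mem_image.mp this
      rw [hwapp, ← hax, Equiv.Perm.inv_def, Equiv.symm_apply_apply]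
      exact (hmemS1 a).mp ha
    · intro hi
      by_contra hik
      have := hw0T2 i hik
      obtain ⟨a, ha, hax⟩ := Finset.mem_image.mp this
      rw [hwapp, ← hax, Equiv.Perm.inv_def, Equiv.symm_apply_apply] at hi
      exact (hmemS2 a).mp ha hi
  · -- circular condition on the second block
    intro i j hkj hji
    have hjS : j ∈ S2 := (hmemS2 j).mpr (not_lt.mpr hkj)
    have hiS : i ∈ S2 := (hmemS2 i).mpr (not_lt.mpr (le_trans hkj (le_of_lt hji)))
    have hik : ¬ (i : ℕ) < k := (hmemS2 i).mp hiS
    have hjk : ¬ (j : ℕ) < k := (hmemS2 j).mp hjS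
    have hk := hgkey2 i hiS j hjS hji
    have hwi : w i = g2 i := by rw [hwapp]; simp only [hw0, if_neg hik]
    have hwj : w j = g2 j := by rw [hwapp]; simp only [hw0, if_neg hjk]
    rw [← hwi, ← hwj] at hk
    simp only [hkey2] at hk
    constructor
    · intro he
      rw [← he] at hk
      simp at hk
    · rintro ⟨hne', hlt'⟩
      rw [Fin.lt_def] at hlt'
      omega
  · -- circular condition on the first block
    intro i j hji hik
    have hiS : i ∈ S1 := (hmemS1 i).mpr hik
    have hjS : j ∈ S1 := (hmemS1 j).mpr (lt_trans (Fin.lt_def.mp hji) hik)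
    have hjk : (j : ℕ) < k := (hmemS1 j).mp hjS
    have hk := hgkey1 i hiS j hjS hji
    have hwi : w i = g1 i := by rw [hwapp]; simp only [hw0, if_pos hik]
    have hwj : w j = g1 j := by rw [hwapp]; simp only [hw0, if_pos hjk]
    rw [← hwi, ← hwj] at hk
    simp only [hkey1] at hk
    constructor
    · intro he
      rw [he] at hk
      simp at hk
    · rintro ⟨hne', hlt'⟩
      rw [Fin.lt_def] at hlt'
      omega
  · -- uniqueness
    rintro w' ⟨hcoset, hcond2, hcond1⟩
    have hmem := hmemT1 w' hcoset
    have hk2 := (hkeycond w').1 hcond2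
    have hk1 := (hkeycond w').2 hcond1
    have heq1 : ∀ x ∈ S1, w' x = g1 x := by
      refine huniq1 w' ⟨?_, w'.injective.injOn, hk1⟩
      intro i hi; exact (hmem i).1 ((hmemS1 i).mp hi)
    have heq2 : ∀ x ∈ S2, w' x = g2 x := by
      refine huniq2 w' ⟨?_, w'.injective.injOn, hk2⟩
      intro i hi; exact (hmem i).2 ((hmemS2 i).mp hi)
    ext x
    rw [hwapp]
    by_cases hx : (x : ℕ) < k
    · rw [heq1 x ((hmemS1 x).mpr hx)]; simp only [hw0, if_pos hx]
    · rw [heq2 x ((hmemS2 x).mpr hx)]; simp only [hw0, if_neg hx]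
end
end

section
/- Let W be a finite Weyl group, and for each positive root β that is not simple, let Q_β be the operator on the free module with basis { [w t_ξ] : w ∈ W, ξ ∈ Q^{∨,+} } defined by Q_β[w t_ξ] = [w s_β t_ξ] if w → w s_β is a Bruhat edge in QB(W), Q_β[w t_ξ] = [w s_β t_{ξ+β^∨}] if it is a quantum edge, and 0 otherwise. Then Q_β² = 0. -/
open scoped RealInnerProductSpace Classical

noncomputable section

/-- Ambient Euclidean space. -/
abbrev EV (d : ℕ) := EuclideanSpace ℝ (Fin d)

/-- The pairing `⟨x, β^∨⟩ = 2(x,β)/(β,β)`. -/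
def pairCo {d : ℕ} (β x : EV d) : ℝ := 2 * (inner ℝ x β : ℝ) / (inner ℝ β β : ℝ)

/-- Reflection in the hyperplane orthogonal to `β`. -/
def reflFun {d : ℕ} (β : EV d) (v : EV d) : EV d := v - pairCo β v • β

lemma reflFun_involutive {d : ℕ} (β : EV d) : Function.Involutive (reflFun β) := by
  intro v
  by_cases h : ((inner ℝ β β : ℝ)) = 0
  · have hβ : β = 0 := inner_self_eq_zero.mp h
    simp [reflFun, pairCo, hβ]
  · have key : pairCo β (reflFun β v) = - pairCo β v := by
      simp only [reflFun, pairCo, inner_sub_left, real_inner_smul_left]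
      set a : ℝ := inner ℝ v β
      set b : ℝ := inner ℝ β β
      field_simp
      ring
    calc reflFun β (reflFun β v)
        = reflFun β v - pairCo β (reflFun β v) • β := rfl
      _ = (v - pairCo β v • β) - (- pairCo β v) • β := by rw [key]; rfl
      _ = v := by module

/-- The reflection `s_β` as a permutation of the ambient space. -/
def sPerm {d : ℕ} (β : EV d) : Equiv.Perm (EV d) := (reflFun_involutive β).toPerm

/-- The Weyl group: the subgroup generated by the reflections in the roots of `Φ`. -/
def weylGroup {d : ℕ} (Φ : Finset (EV d)) : Subgroup (Equiv.Perm (EV d)) :=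
  Subgroup.closure {p | ∃ β ∈ Φ, p = sPerm β}

/-- Length of `w`: the number of positive roots sent by `w` to negative roots. -/
def len {d : ℕ} (Φp : Finset (EV d)) (w : Equiv.Perm (EV d)) : ℕ :=
  (Φp.filter (fun α => -(w α) ∈ Φp)).card

/-- The half-sum of the positive roots. -/
def rho {d : ℕ} (Φp : Finset (EV d)) : EV d := (1/2 : ℝ) • ∑ α ∈ Φp, α

/-- The coroot `β^∨`. -/
def coroot {d : ℕ} (β : EV d) : EV d := (2 / (inner ℝ β β : ℝ)) • β

/-- Bruhat edge `w → w s_β` of the quantum Bruhat graph: `ℓ(w s_β) = ℓ(w) + 1`. -/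
def BruhatEdge {d : ℕ} (Φp : Finset (EV d)) (w : Equiv.Perm (EV d)) (β : EV d) : Prop :=
  len Φp (w * sPerm β) = len Φp w + 1

/-- Quantum edge `w → w s_β`: `ℓ(w s_β) = ℓ(w) + 1 - 2⟨ρ, β^∨⟩`. -/
def QuantumEdge {d : ℕ} (Φp : Finset (EV d)) (w : Equiv.Perm (EV d)) (β : EV d) : Prop :=
  (len Φp (w * sPerm β) : ℝ) + 2 * pairCo β (rho Φp) = (len Φp w : ℝ) + 1

/-- Edge of the quantum Bruhat graph labeled by a positive root `β`. -/
def QBGEdge {d : ℕ} (Φp : Finset (EV d)) (w : Equiv.Perm (EV d)) (β : EV d) : Prop :=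
  β ∈ Φp ∧ (BruhatEdge Φp w β ∨ QuantumEdge Φp w β)

/-- `IsQBGPath Φp w bs v`: `bs` is the list of labels of a directed path
from `w` to `v` in the quantum Bruhat graph. -/
def IsQBGPath {d : ℕ} (Φp : Finset (EV d)) :
    Equiv.Perm (EV d) → List (EV d) → Equiv.Perm (EV d) → Prop
  | w, [], v => w = v
  | w, β :: bs, v => QBGEdge Φp w β ∧ IsQBGPath Φp (w * sPerm β) bs v

/-- The weight of a path: the sum of the coroots `β^∨` over its quantum edges. -/
def pathWt {d : ℕ} (Φp : Finset (EV d)) :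
    Equiv.Perm (EV d) → List (EV d) → EV d
  | _, [] => 0
  | w, β :: bs => (if QuantumEdge Φp w β then coroot β else 0) + pathWt Φp (w * sPerm β) bs

/-- Axioms for a finite crystallographic reduced root system `Φ`
with a choice of positive system `Φp`. -/
structure IsRootSystem {d : ℕ} (Φ Φp : Finset (EV d)) : Prop where
  zero_not_mem : (0 : EV d) ∉ Φ
  refl_mem : ∀ α ∈ Φ, ∀ β ∈ Φ, reflFun α β ∈ Φ
  crys : ∀ α ∈ Φ, ∀ β ∈ Φ, ∃ z : ℤ, (z : ℝ) = pairCo α β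
  reduced : ∀ α ∈ Φ, ∀ t : ℝ, t • α ∈ Φ → t = 1 ∨ t = -1
  pos_subset : Φp ⊆ Φ
  pos_or_neg : ∀ α ∈ Φ, α ∈ Φp ∨ -α ∈ Φp
  pos_not_neg : ∀ α ∈ Φp, -α ∉ Φp
  pos_add : ∀ α ∈ Φp, ∀ β ∈ Φp, α + β ∈ Φ → α + β ∈ Φp

/-- The simple roots: positive roots that are not sums of two positive roots. -/
def simpleRoots {d : ℕ} (Φp : Finset (EV d)) : Set (EV d) :=
  {α | α ∈ Φp ∧ ¬ ∃ β ∈ Φp, ∃ γ ∈ Φp, α = β + γ}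

/-- The cone `Q^{∨,+}` of nonnegative integer combinations of the positive coroots. -/
def posCorootCone {d : ℕ} (Φp : Finset (EV d)) : AddSubmonoid (EV d) :=
  AddSubmonoid.closure {x | ∃ β ∈ Φp, x = coroot β}

/-- The free `ℤ`-module with basis `[w t_ξ]`, `w ∈ W`, `ξ ∈ Q^{∨,+}`. -/
abbrev QModule {d : ℕ} (Φp : Finset (EV d)) : Type _ :=
  (Equiv.Perm (EV d) × posCorootCone Φp) →₀ ℤ

/-- The image of the basis element `[w t_ξ]` under the quantum Bruhat operator `Q_β`. -/
noncomputable def Qimage {d : ℕ} (Φp : Finset (EV d)) (β : EV d) (hβ : β ∈ Φp)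
    (p : Equiv.Perm (EV d) × posCorootCone Φp) : QModule Φp :=
  if BruhatEdge Φp p.1 β then Finsupp.single (p.1 * sPerm β, p.2) 1
  else if QuantumEdge Φp p.1 β then
    Finsupp.single
      (p.1 * sPerm β, p.2 + ⟨coroot β, AddSubmonoid.subset_closure ⟨β, hβ, rfl⟩⟩) 1
  else 0

/-- The quantum Bruhat operator `Q_β`. -/
noncomputable def Qop {d : ℕ} (Φp : Finset (EV d)) (β : EV d) (hβ : β ∈ Φp) :
    QModule Φp →ₗ[ℤ] QModule Φp :=
  Finsupp.lsum ℤ fun p => LinearMap.toSpanSingleton ℤ (QModule Φp) (Qimage Φp β hβ p)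

section AuxStmt15

variable {d : ℕ}

lemma pairCo_add' (β x y : EV d) : pairCo β (x + y) = pairCo β x + pairCo β y := by
  simp only [pairCo, inner_add_left]; ring

lemma pairCo_self' {β : EV d} (hβ : β ≠ 0) : pairCo β β = 2 := by
  have h : (inner ℝ β β : ℝ) ≠ 0 := fun h => hβ (inner_self_eq_zero.mp h)
  rw [pairCo, mul_div_assoc, div_self h, mul_one]

lemma reflFun_add' (β x y : EV d) :
    reflFun β (x + y) = reflFun β x + reflFun β y := by
  simp only [reflFun, pairCo_add', add_smul]; abel

lemma sPerm_apply' (β v : EV d) : sPerm β v = reflFun β v := rfl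

lemma sPerm_sq' (β : EV d) : sPerm β * sPerm β = 1 := by
  apply Equiv.ext
  intro v
  exact reflFun_involutive β v

lemma reflFun_self' {β : EV d} (hβ : β ≠ 0) : reflFun β β = -β := by
  rw [reflFun, pairCo_self' hβ]; module

lemma inner_reflFun' {β : EV d} (hβ : β ≠ 0) (v : EV d) :
    (inner ℝ (reflFun β v) β : ℝ) = - (inner ℝ v β : ℝ) := by
  have h : (inner ℝ β β : ℝ) ≠ 0 := fun h => hβ (inner_self_eq_zero.mp h)
  simp only [reflFun, inner_sub_left, real_inner_smul_left, pairCo]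
  set a : ℝ := inner ℝ v β
  set b : ℝ := inner ℝ β β
  field_simp
  ring

lemma inner_self_pos' {β : EV d} (hβ : β ≠ 0) : (0:ℝ) < inner ℝ β β :=
  lt_of_le_of_ne real_inner_self_nonneg
    (fun h => hβ (inner_self_eq_zero.mp h.symm))

variable {Φ Φp : Finset (EV d)} (hRS : IsRootSystem Φ Φp)

include hRS

lemma root_ne_zero' {α : EV d} (hα : α ∈ Φ) : α ≠ 0 := by
  rintro rfl; exact hRS.zero_not_mem hα

lemma neg_mem_Phi' {α : EV d} (hα : α ∈ Φ) : -α ∈ Φ := by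
  have := hRS.refl_mem α hα α hα
  rwa [reflFun_self' (root_ne_zero' hRS hα)] at this

/-- Key positivity: if `α ∈ Φp`, `α ≠ β`, and `s_β α` is a negative root,
then `(α, β) > 0`. -/
lemma key_pos' {β : EV d} (hβ : β ∈ Φp) {α : EV d} (hα : α ∈ Φp)
    (hne : α ≠ β) (hN : -reflFun β α ∈ Φp) : 0 < (inner ℝ α β : ℝ) := by
  have hβΦ : β ∈ Φ := hRS.pos_subset hβ
  have hαΦ : α ∈ Φ := hRS.pos_subset hα
  have hβ0 : β ≠ 0 := root_ne_zero' hRS hβΦ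
  have hα0 : α ≠ 0 := root_ne_zero' hRS hαΦ
  have hbb : (0:ℝ) < inner ℝ β β := inner_self_pos' hβ0
  have haa : (0:ℝ) < inner ℝ α α := inner_self_pos' hα0
  by_contra hle
  push_neg at hle
  obtain ⟨z, hz⟩ := hRS.crys β hβΦ α hαΦ
  have hzval : 2 * (inner ℝ α β : ℝ) = (z : ℝ) * (inner ℝ β β : ℝ) := by
    have h := hz
    simp only [pairCo] at h
    rw [h, div_mul_cancel₀ _ (ne_of_gt hbb)]
  have hzZ : z ≤ 0 := by
    by_contra h
    push_neg at h
    have h1 : (1:ℝ) ≤ (z:ℝ) := by exact_mod_cast h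
    nlinarith
  have hrefl : reflFun β α = α - (z : ℝ) • β := by rw [reflFun, hz]
  rcases eq_or_lt_of_le hzZ with hz0 | hzneg
  · -- z = 0 : s_β α = α, so -α ∈ Φp, contradiction
    have he : reflFun β α = α := by rw [hrefl, hz0]; push_cast; simp
    rw [he] at hN
    exact hRS.pos_not_neg α hα hN
  · have hip_neg : (inner ℝ α β : ℝ) < 0 := by
      have hzR : (z:ℝ) ≤ -1 := by
        have h' : z ≤ -1 := by omega
        exact_mod_cast h'
      nlinarith
    rcases eq_or_lt_of_le (show z ≤ -1 by omega) with hzm1 | hzlt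
    · -- z = -1 : α + (-s_β α) = -β ∈ Φp, contradiction
      have h1 : α + (-reflFun β α) = -β := by
        rw [hrefl, hzm1]; push_cast; module
      have h2 : α + (-reflFun β α) ∈ Φ := by
        rw [h1]; exact neg_mem_Phi' hRS hβΦ
      have h3 := hRS.pos_add α hα _ hN h2
      rw [h1] at h3
      exact hRS.pos_not_neg β hβ h3
    · -- z ≤ -2
      have hzle : z ≤ -2 := by omega
      obtain ⟨m, hm⟩ := hRS.crys α hαΦ β hβΦ
      have hmval : 2 * (inner ℝ α β : ℝ) = (m : ℝ) * (inner ℝ α α : ℝ) := by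
        have h := hm
        simp only [pairCo] at h
        rw [real_inner_comm α β] at h
        rw [h, div_mul_cancel₀ _ (ne_of_gt haa)]
      have hmZ : m ≤ -1 := by
        have h1 : (m:ℝ) < 0 := by nlinarith
        have h2 : m < 0 := by exact_mod_cast h1
        omega
      have hna : (0:ℝ) < ‖α‖ := norm_pos_iff.mpr hα0
      have hnb : (0:ℝ) < ‖β‖ := norm_pos_iff.mpr hβ0
      -- strict Cauchy-Schwarz (α, β not proportional)
      have hcs : (inner ℝ α β : ℝ) * (inner ℝ α β : ℝ) <
          (inner ℝ α α : ℝ) * (inner ℝ β β : ℝ) := by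
        rcases lt_or_eq_of_le (real_inner_mul_inner_self_le α β) with h | h
        · exact h
        · exfalso
          have e1 : (inner ℝ α α : ℝ) = ‖α‖ * ‖α‖ := real_inner_self_eq_norm_mul_norm α
          have e2 : (inner ℝ β β : ℝ) = ‖β‖ * ‖β‖ := real_inner_self_eq_norm_mul_norm β
          set x : ℝ := (inner ℝ α β : ℝ) / (‖α‖ * ‖β‖) with hx
          have hx2 : x ^ 2 = 1 := by
            rw [hx, div_pow]
            rw [div_eq_one_iff_eq (by positivity)]
            rw [mul_pow]
            nlinarith
          have hxone : x = 1 ∨ x = -1 := by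
            rcases mul_eq_zero.mp (show (x - 1) * (x + 1) = 0 by linear_combination hx2) with h' | h'
            · left; linarith
            · right; linarith
          have habs : |x| = 1 := by
            rcases hxone with h' | h' <;> rw [h'] <;> norm_num
          obtain ⟨-, r, hr0, hr⟩ :=
            (abs_real_inner_div_norm_mul_norm_eq_one_iff α β).mp habs
          rcases hRS.reduced α hαΦ r (by rw [← hr]; exact hβΦ) with h1 | h1
          · rw [h1, one_smul] at hr
            exact hne hr.symm
          · rw [h1, neg_one_smul] at hr
            rw [hr] at hβ
            exact hRS.pos_not_neg α hα hβ
      have hmz3 : m * z ≤ 3 := by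
        have hR : ((m * z : ℤ) : ℝ) < 4 := by
          push_cast
          have h4 : ((m:ℝ) * (inner ℝ α α : ℝ)) * ((z:ℝ) * (inner ℝ β β : ℝ)) =
              4 * ((inner ℝ α β : ℝ) * (inner ℝ α β : ℝ)) := by
            rw [← hmval, ← hzval]; ring
          nlinarith [mul_pos haa hbb]
        have : (m * z : ℤ) < 4 := by exact_mod_cast hR
        omega
      have hm1 : m = -1 := by
        by_contra h
        have h2 : m ≤ -2 := by omega
        nlinarith [mul_nonneg (show (0:ℤ) ≤ -(m+2) by omega) (show (0:ℤ) ≤ -(z+2) by omega)]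
      have hz23 : z = -2 ∨ z = -3 := by
        subst hm1; omega
      -- α + β is a root: s_α β = β + α
      have hab : α + β ∈ Φ := by
        have hr := hRS.refl_mem α hαΦ β hβΦ
        have hpm : pairCo α β = -1 := by rw [← hm, hm1]; norm_num
        have he : reflFun α β = α + β := by rw [reflFun, hpm]; module
        rwa [he] at hr
      have habp : α + β ∈ Φp := hRS.pos_add α hα β hβ hab
      -- s_β α = α - zβ is a root
      have hηΦ : α - (z:ℝ) • β ∈ Φ := by
        have h1 : -reflFun β α ∈ Φ := hRS.pos_subset hN
        have h2 := neg_mem_Phi' hRS h1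
        rwa [neg_neg, hrefl] at h2
      rcases hz23 with hz2 | hz3
      · -- z = -2 : α + 2β ∈ Φp but also its negative
        have he : (α + β) + β = α - (z:ℝ) • β := by
          rw [hz2]; push_cast; module
        have h1 := hRS.pos_add (α+β) habp β hβ (by rw [he]; exact hηΦ)
        rw [he] at h1
        rw [hrefl] at hN
        exact hRS.pos_not_neg _ h1 hN
      · -- z = -3 : α + 2β ∈ Φ via s_β(α+β), then α + 3β ∈ Φp, contradiction
        have hpab : pairCo β (α + β) = -1 := by
          rw [pairCo_add', pairCo_self' hβ0, ← hz, hz3]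
          push_cast; ring
        have ha2b : (α + β) + β ∈ Φ := by
          have hr := hRS.refl_mem β hβΦ (α+β) hab
          have he : reflFun β (α+β) = (α+β) + β := by rw [reflFun, hpab]; module
          rwa [he] at hr
        have ha2bp : (α + β) + β ∈ Φp := hRS.pos_add (α+β) habp β hβ ha2b
        have he3 : ((α + β) + β) + β = α - (z:ℝ) • β := by
          rw [hz3]; push_cast; module
        have h1 := hRS.pos_add ((α+β)+β) ha2bp β hβ (by rw [he3]; exact hηΦ)
        rw [he3] at h1
        rw [hrefl] at hN
        exact hRS.pos_not_neg _ h1 hN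

/-- If `β` is positive non-simple, some positive root `α ≠ β` is sent to a
negative root by `s_β`. -/
lemma exists_inversion' {β : EV d} (hβ : β ∈ Φp) (hns : β ∉ simpleRoots Φp) :
    ∃ α ∈ Φp, α ≠ β ∧ -reflFun β α ∈ Φp := by
  have hβΦ : β ∈ Φ := hRS.pos_subset hβ
  have hβ0 : β ≠ 0 := root_ne_zero' hRS hβΦ
  have hdecomp : ∃ γ ∈ Φp, ∃ δ ∈ Φp, β = γ + δ := by
    by_contra h
    exact hns ⟨hβ, h⟩
  obtain ⟨γ, hγ, δ, hδ, hsum⟩ := hdecomp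
  have hγ0 : γ ≠ β := by
    rintro rfl
    apply hRS.zero_not_mem
    have h0 : δ = 0 := by
      have h := hsum
      rwa [left_eq_add] at h
    rw [← h0]; exact hRS.pos_subset hδ
  have hδ0 : δ ≠ β := by
    rintro rfl
    apply hRS.zero_not_mem
    have h0 : γ = 0 := by
      have h := hsum
      rwa [right_eq_add] at h
    rw [← h0]; exact hRS.pos_subset hγ
  by_cases h1 : -reflFun β γ ∈ Φp
  · exact ⟨γ, hγ, hγ0, h1⟩
  by_cases h2 : -reflFun β δ ∈ Φp
  · exact ⟨δ, hδ, hδ0, h2⟩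
  exfalso
  have hγ' : reflFun β γ ∈ Φp :=
    (hRS.pos_or_neg _ (hRS.refl_mem β hβΦ γ (hRS.pos_subset hγ))).resolve_right h1
  have hδ' : reflFun β δ ∈ Φp :=
    (hRS.pos_or_neg _ (hRS.refl_mem β hβΦ δ (hRS.pos_subset hδ))).resolve_right h2
  have hsum2 : reflFun β γ + reflFun β δ = -β := by
    rw [← reflFun_add', ← hsum, reflFun_self' hβ0]
  have h3 := hRS.pos_add _ hγ' _ hδ' (by rw [hsum2]; exact neg_mem_Phi' hRS hβΦ)
  rw [hsum2] at h3
  exact hRS.pos_not_neg β hβ h3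

/-- The crucial inequality: `⟨ρ, β^∨⟩ > 1` for `β` positive and non-simple. -/
lemma pairCo_rho_gt_one' {β : EV d} (hβ : β ∈ Φp) (hns : β ∉ simpleRoots Φp) :
    1 < pairCo β (rho Φp) := by
  classical
  have hβΦ : β ∈ Φ := hRS.pos_subset hβ
  have hβ0 : β ≠ 0 := root_ne_zero' hRS hβΦ
  have hbb : (0:ℝ) < inner ℝ β β := inner_self_pos' hβ0
  set N : Finset (EV d) := Φp.filter (fun α => -(reflFun β α) ∈ Φp) with hN
  have hNsub : N ⊆ Φp := Finset.filter_subset _ _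
  have hsum0 : ∑ α ∈ Φp \ N, (inner ℝ α β : ℝ) = 0 := by
    apply Finset.sum_involution (fun α _ => reflFun β α)
    · intro a ha
      rw [inner_reflFun' hβ0 a]; ring
    · intro a ha hfa h
      apply hfa
      have hi := inner_reflFun' hβ0 a
      rw [h] at hi
      linarith
    · intro a ha
      rw [Finset.mem_sdiff, hN, Finset.mem_filter] at ha ⊢
      obtain ⟨hap, hnot⟩ := ha
      have hanot : ¬ (-(reflFun β a) ∈ Φp) := fun hc => hnot ⟨hap, hc⟩
      have haΦ : a ∈ Φ := hRS.pos_subset hap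
      have hraΦ : reflFun β a ∈ Φ := hRS.refl_mem β hβΦ a haΦ
      have hpos : reflFun β a ∈ Φp := (hRS.pos_or_neg _ hraΦ).resolve_right hanot
      refine ⟨hpos, fun hc => ?_⟩
      rw [reflFun_involutive β a] at hc
      exact hRS.pos_not_neg a hap hc.2
    · intro a ha
      exact reflFun_involutive β a
  have hsplit : ∑ α ∈ Φp, (inner ℝ α β : ℝ) = ∑ α ∈ N, (inner ℝ α β : ℝ) := by
    rw [← Finset.sum_sdiff hNsub, hsum0, zero_add]
  have hβN : β ∈ N := by
    rw [hN, Finset.mem_filter]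
    refine ⟨hβ, ?_⟩
    rw [reflFun_self' hβ0, neg_neg]
    exact hβ
  obtain ⟨α₀, hα₀p, hα₀ne, hα₀N⟩ := exists_inversion' hRS hβ hns
  have hα₀ : α₀ ∈ N.erase β := by
    rw [Finset.mem_erase, hN, Finset.mem_filter]
    exact ⟨hα₀ne, hα₀p, hα₀N⟩
  have hpos_sum : 0 < ∑ α ∈ N.erase β, (inner ℝ α β : ℝ) := by
    apply Finset.sum_pos
    · intro α hα
      rw [Finset.mem_erase, hN, Finset.mem_filter] at hα
      exact key_pos' hRS hβ hα.2.1 hα.1 hα.2.2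
    · exact ⟨α₀, hα₀⟩
  have hNsum : (inner ℝ β β : ℝ) < ∑ α ∈ N, (inner ℝ α β : ℝ) := by
    rw [← Finset.add_sum_erase N _ hβN]
    linarith
  have hrho : (inner ℝ (rho Φp) β : ℝ) = (1/2) * ∑ α ∈ Φp, (inner ℝ α β : ℝ) := by
    rw [rho, real_inner_smul_left, sum_inner]
  rw [pairCo, hrho, hsplit, lt_div_iff₀ hbb]
  linarith

end AuxStmt15

/-- For a positive root `β` that is not simple, the quantum Bruhat
operator satisfies `Q_β² = 0`. -/
theorem stmt15 {d : ℕ} (Φ Φp : Finset (EV d)) (hRS : IsRootSystem Φ Φp)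
    (β : EV d) (hβ : β ∈ Φp) (hns : β ∉ simpleRoots Φp) :
    Qop Φp β hβ ∘ₗ Qop Φp β hβ = 0 := by
  have hc : 1 < pairCo β (rho Φp) := pairCo_rho_gt_one' hRS hβ hns
  have hss : ∀ w : Equiv.Perm (EV d), (w * sPerm β) * sPerm β = w := by
    intro w
    rw [mul_assoc, sPerm_sq', mul_one]
  apply Finsupp.lhom_ext
  intro p n
  simp only [LinearMap.comp_apply, LinearMap.zero_apply]
  have h1 : Qop Φp β hβ (Finsupp.single p n) = n • Qimage Φp β hβ p := by
    rw [Qop, Finsupp.lsum_single, LinearMap.toSpanSingleton_apply]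
  rw [h1, map_smul]
  suffices h : Qop Φp β hβ (Qimage Φp β hβ p) = 0 by rw [h, smul_zero]
  obtain ⟨w, ξ⟩ := p
  by_cases hB : BruhatEdge Φp w β
  · -- Bruhat edge from w: no edge back from w s_β
    have hnB : ¬ BruhatEdge Φp (w * sPerm β) β := by
      intro h
      unfold BruhatEdge at h hB
      rw [hss] at h
      omega
    have hnQ : ¬ QuantumEdge Φp (w * sPerm β) β := by
      intro h
      unfold QuantumEdge at h
      unfold BruhatEdge at hB
      rw [hss, hB] at h
      push_cast at h
      linarith
    simp only [Qimage]
    rw [if_pos hB, Qop, Finsupp.lsum_single, LinearMap.toSpanSingleton_apply, one_smul]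
    simp only [Qimage]
    rw [if_neg hnB, if_neg hnQ]
  · by_cases hQ : QuantumEdge Φp w β
    · -- quantum edge from w: no edge back from w s_β
      have hnB : ¬ BruhatEdge Φp (w * sPerm β) β := by
        intro h
        unfold BruhatEdge at h
        unfold QuantumEdge at hQ
        rw [hss] at h
        rw [h] at hQ
        push_cast at hQ
        linarith
      have hnQ : ¬ QuantumEdge Φp (w * sPerm β) β := by
        intro h
        unfold QuantumEdge at h hQ
        rw [hss] at h
        linarith
      simp only [Qimage]
      rw [if_neg hB, if_pos hQ, Qop, Finsupp.lsum_single,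
        LinearMap.toSpanSingleton_apply, one_smul]
      simp only [Qimage]
      rw [if_neg hnB, if_neg hnQ]
    · simp only [Qimage]
      rw [if_neg hB, if_neg hQ, map_zero]
end
end
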